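/- arXiv:1308.3242 — 4 statements merged into one kernel-verified Lean document; each statement's English description precedes it below -/
import Mathlib

section
/- Let n, r ∈ ℕ with r ≥ 1, let G be an n-vertex r-regular triangle-free finite simple graph, and let m = nr/2 be its number of edges. Then, as rational numbers, i_4(G) ≤ C(n,4) − C(n−2,2)·m + n(n−3)·C(r,2) − n·C(r,3) + m·((m − r²)/2 − (r−1)²/4). -/
open Finset

/-- `numIndep G t` is the number of independent sets of size `t` in `G`, i.e. the number of
`t`-element subsets of the vertex set containing no edge. -/
def numIndep {V : Type*} (G : SimpleGraph V) [Fintype V] [DecidableEq V] [DecidableRel G.Adj]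
    (t : ℕ) : ℕ :=
  (((univ : Finset V).powersetCard t).filter fun s => ∀ u ∈ s, ∀ v ∈ s, ¬ G.Adj u v).card

namespace Aux14
variable {V : Type*} [Fintype V] [DecidableEq V] (G : SimpleGraph V) [DecidableRel G.Adj]

/-- The edges of `G` inside a vertex subset `S`. -/
def ES (S : Finset V) : Finset (Sym2 V) := G.edgeFinset.filter (fun e => ∀ v ∈ e, v ∈ S)

lemma mem_ES {S : Finset V} {e : Sym2 V} :
    e ∈ ES G S ↔ e ∈ G.edgeFinset ∧ ∀ v ∈ e, v ∈ S := Finset.mem_filter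

lemma adj_mem_ES {S : Finset V} {a b : V} (hab : G.Adj a b) (ha : a ∈ S) (hb : b ∈ S) :
    s(a, b) ∈ ES G S := by
  rw [mem_ES]
  refine ⟨SimpleGraph.mem_edgeFinset.2 hab, ?_⟩
  intro v hv
  rcases Sym2.mem_iff.1 hv with h | h <;> subst h <;> assumption

lemma ES_eq_empty_iff {S : Finset V} :
    ES G S = ∅ ↔ ∀ u ∈ S, ∀ v ∈ S, ¬ G.Adj u v := by
  constructor
  · intro h u hu v hv hadj
    have := adj_mem_ES G hadj hu hv
    simp [h] at this
  · intro h
    rw [Finset.eq_empty_iff_forall_notMem]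
    intro e he
    rw [mem_ES] at he
    obtain ⟨he1, he2⟩ := he
    induction e with
    | _ a b =>
      have hadj : G.Adj a b := SimpleGraph.mem_edgeFinset.1 he1
      exact h a (he2 a (by simp)) b (he2 b (by simp)) hadj

/-- number of `k`-subsets (of univ) containing a fixed set `A` of size `a`. -/
lemma countSup (A : Finset V) (a k : ℕ) (hA : A.card = a) (hak : a ≤ k) :
    (((univ : Finset V).powersetCard k).filter (fun S => A ⊆ S)).card
      = (Fintype.card V - a).choose (k - a) := by
  have : (((univ : Finset V).powersetCard k).filter (fun S => A ⊆ S)).card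
      = (((univ : Finset V) \ A).powersetCard (k - a)).card := by
    apply Finset.card_bij' (fun S _ => S \ A) (fun B _ => B ∪ A)
    · intro S hS
      rw [Finset.mem_filter, Finset.mem_powersetCard] at hS
      obtain ⟨⟨_, hScard⟩, hAS⟩ := hS
      rw [Finset.mem_powersetCard]
      constructor
      · intro x hx; simp [Finset.mem_sdiff] at hx ⊢; exact hx.2
      · rw [Finset.card_sdiff_of_subset hAS, hScard, hA]
    · intro B hB
      rw [Finset.mem_powersetCard] at hB
      obtain ⟨hBsub, hBcard⟩ := hB
      have hdisj : Disjoint B A := by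
        intro x hx1 hx2
        intro y hy
        have := hx1 hy
        have := hx2 hy
        have h1 := hBsub (hx1 hy)
        rw [Finset.mem_sdiff] at h1
        exact absurd (hx2 hy) h1.2
      rw [Finset.mem_filter, Finset.mem_powersetCard]
      refine ⟨⟨Finset.subset_univ _, ?_⟩, Finset.subset_union_right⟩
      rw [Finset.card_union_of_disjoint hdisj, hBcard, hA]
      omega
    · intro S hS
      rw [Finset.mem_filter] at hS
      exact Finset.sdiff_union_of_subset hS.2
    · intro B hB
      rw [Finset.mem_powersetCard] at hB
      apply Finset.union_sdiff_cancel_right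
      intro x hx1 hx2
      intro y hy
      have h1 := hB.1 (hx1 hy)
      rw [Finset.mem_sdiff] at h1
      exact absurd (hx2 hy) h1.2
  rw [this, Finset.card_powersetCard, Finset.card_sdiff_of_subset (Finset.subset_univ A), hA,
    Finset.card_univ]

lemma sym2_eq_of_two_mem {e : Sym2 V} {v w : V} (h : v ≠ w) (hv : v ∈ e) (hw : w ∈ e) :
    e = s(v, w) := by
  induction e with
  | _ a b =>
    rcases Sym2.mem_iff.1 hv with rfl | rfl <;> rcases Sym2.mem_iff.1 hw with rfl | rfl <;>
      first
      | rfl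
      | (exact absurd rfl h)
      | (exact Sym2.eq_swap)

lemma count_one_edge {e : Sym2 V} (he : e ∈ G.edgeFinset) :
    (((univ : Finset V).powersetCard 4).filter (fun S => ∀ v ∈ e, v ∈ S)).card
      = (Fintype.card V - 2).choose 2 := by
  induction e with
  | _ u v =>
    have hadj : G.Adj u v := by rwa [SimpleGraph.mem_edgeFinset, SimpleGraph.mem_edgeSet] at he
    have hcong : ((univ : Finset V).powersetCard 4).filter (fun S => ∀ w ∈ s(u, v), w ∈ S)
        = ((univ : Finset V).powersetCard 4).filter (fun S => ({u, v} : Finset V) ⊆ S) := by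
      apply Finset.filter_congr
      intro S _
      simp [Sym2.mem_iff, Finset.insert_subset_iff, or_imp, forall_and]
    rw [hcong, countSup ({u, v} : Finset V) 2 4 (by rw [Finset.card_insert_of_notMem (by simp [hadj.ne]), Finset.card_singleton]) (by norm_num)]

lemma sum_ES_card :
    ∑ S ∈ (univ : Finset V).powersetCard 4, (ES G S).card
      = G.edgeFinset.card * (Fintype.card V - 2).choose 2 := by
  have h1 : ∀ S : Finset V, (ES G S).card
      = ∑ e ∈ G.edgeFinset, if (∀ v ∈ e, v ∈ S) then 1 else 0 := by
    intro S; rw [ES, Finset.card_filter]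
  calc ∑ S ∈ (univ : Finset V).powersetCard 4, (ES G S).card
      = ∑ S ∈ (univ : Finset V).powersetCard 4, ∑ e ∈ G.edgeFinset,
          if (∀ v ∈ e, v ∈ S) then 1 else 0 := by simp_rw [h1]
    _ = ∑ e ∈ G.edgeFinset, ∑ S ∈ (univ : Finset V).powersetCard 4,
          if (∀ v ∈ e, v ∈ S) then 1 else 0 := Finset.sum_comm
    _ = ∑ e ∈ G.edgeFinset, (((univ : Finset V).powersetCard 4).filter
          (fun S => ∀ v ∈ e, v ∈ S)).card := by simp_rw [Finset.card_filter]
    _ = ∑ e ∈ G.edgeFinset, (Fintype.card V - 2).choose 2 :=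
        Finset.sum_congr rfl (fun e he => count_one_edge G he)
    _ = G.edgeFinset.card * (Fintype.card V - 2).choose 2 := by
        rw [Finset.sum_const, smul_eq_mul]

lemma ES_offDiag_eq (S : Finset V) :
    (ES G S).offDiag = G.edgeFinset.offDiag.filter
      (fun p => (∀ v ∈ p.1, v ∈ S) ∧ (∀ v ∈ p.2, v ∈ S)) := by
  ext p
  simp only [Finset.mem_offDiag, mem_ES, Finset.mem_filter]
  tauto

lemma count_share {e f : Sym2 V} (he : e ∈ G.edgeFinset) (hf : f ∈ G.edgeFinset)
    (hne : e ≠ f) {w : V} (hwe : w ∈ e) (hwf : w ∈ f) :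
    (((univ : Finset V).powersetCard 4).filter
        (fun S => (∀ v ∈ e, v ∈ S) ∧ (∀ v ∈ f, v ∈ S))).card
      = (Fintype.card V - 3).choose 1 := by
  obtain ⟨x, rfl⟩ := Sym2.mem_iff_exists.1 hwe
  obtain ⟨y, rfl⟩ := Sym2.mem_iff_exists.1 hwf
  have hwx : w ≠ x := by
    intro h; subst h
    exact G.not_isDiag_of_mem_edgeSet (SimpleGraph.mem_edgeFinset.1 he) (Sym2.isDiag_iff_proj_eq |>.2 rfl)
  have hwy : w ≠ y := by
    intro h; subst h
    exact G.not_isDiag_of_mem_edgeSet (SimpleGraph.mem_edgeFinset.1 hf) (Sym2.isDiag_iff_proj_eq |>.2 rfl)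
  have hxy : x ≠ y := by
    intro h; subst h; exact hne rfl
  have hcong : ((univ : Finset V).powersetCard 4).filter
        (fun S => (∀ v ∈ s(w, x), v ∈ S) ∧ (∀ v ∈ s(w, y), v ∈ S))
      = ((univ : Finset V).powersetCard 4).filter
        (fun S => ({w, x, y} : Finset V) ⊆ S) := by
    apply Finset.filter_congr
    intro S _
    simp [Sym2.mem_iff, Finset.insert_subset_iff, or_imp, forall_and]
    tauto
  rw [hcong, countSup ({w, x, y} : Finset V) 3 4 ?_ (by norm_num)]
  rw [Finset.card_insert_of_notMem (by simp [hwx, hwy]),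
    Finset.card_insert_of_notMem (by simp [hxy]), Finset.card_singleton]

lemma count_disj {e f : Sym2 V} (he : e ∈ G.edgeFinset) (hf : f ∈ G.edgeFinset)
    (hnsh : ¬ ∃ v, v ∈ e ∧ v ∈ f) :
    (((univ : Finset V).powersetCard 4).filter
        (fun S => (∀ v ∈ e, v ∈ S) ∧ (∀ v ∈ f, v ∈ S))).card
      = (Fintype.card V - 4).choose 0 := by
  induction e with
  | _ a b =>
  induction f with
  | _ c d =>
  have hab : a ≠ b := fun h => G.not_isDiag_of_mem_edgeSet (SimpleGraph.mem_edgeFinset.1 he)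
    (by subst h; exact Sym2.isDiag_iff_proj_eq |>.2 rfl)
  have hcd : c ≠ d := fun h => G.not_isDiag_of_mem_edgeSet (SimpleGraph.mem_edgeFinset.1 hf)
    (by subst h; exact Sym2.isDiag_iff_proj_eq |>.2 rfl)
  have hac : a ≠ c := fun h => hnsh ⟨a, by simp, by simp [h]⟩
  have had : a ≠ d := fun h => hnsh ⟨a, by simp, by simp [h]⟩
  have hbc : b ≠ c := fun h => hnsh ⟨b, by simp, by simp [h]⟩
  have hbd : b ≠ d := fun h => hnsh ⟨b, by simp, by simp [h]⟩
  have hcong : ((univ : Finset V).powersetCard 4).filter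
        (fun S => (∀ v ∈ s(a, b), v ∈ S) ∧ (∀ v ∈ s(c, d), v ∈ S))
      = ((univ : Finset V).powersetCard 4).filter
        (fun S => ({a, b, c, d} : Finset V) ⊆ S) := by
    apply Finset.filter_congr
    intro S _
    simp [Sym2.mem_iff, Finset.insert_subset_iff, or_imp, forall_and]
    tauto
  rw [hcong, countSup ({a, b, c, d} : Finset V) 4 4 ?_ (by norm_num)]
  rw [Finset.card_insert_of_notMem (by simp [hab, hac, had]),
    Finset.card_insert_of_notMem (by simp [hbc, hbd]),
    Finset.card_insert_of_notMem (by simp [hcd]), Finset.card_singleton]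

/-- ordered pairs of distinct edges sharing a vertex -/
def Psh : Finset (Sym2 V × Sym2 V) :=
  G.edgeFinset.offDiag.filter (fun p => ∃ v, v ∈ p.1 ∧ v ∈ p.2)

/-- ordered pairs of distinct disjoint edges -/
def Pdj : Finset (Sym2 V × Sym2 V) :=
  G.edgeFinset.offDiag.filter (fun p => ¬ ∃ v, v ∈ p.1 ∧ v ∈ p.2)

lemma Psh_card_add_Pdj_card :
    (Psh G).card + (Pdj G).card = G.edgeFinset.card * G.edgeFinset.card - G.edgeFinset.card := by
  rw [Psh, Pdj, Finset.card_filter_add_card_filter_not, Finset.offDiag_card]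

lemma sum_ES_offDiag_card :
    ∑ S ∈ (univ : Finset V).powersetCard 4, (ES G S).offDiag.card
      = (Psh G).card * ((Fintype.card V - 3).choose 1)
        + (Pdj G).card * ((Fintype.card V - 4).choose 0) := by
  have h1 : ∀ S : Finset V, (ES G S).offDiag.card
      = ∑ p ∈ G.edgeFinset.offDiag,
          if ((∀ v ∈ p.1, v ∈ S) ∧ (∀ v ∈ p.2, v ∈ S)) then 1 else 0 := by
    intro S; rw [ES_offDiag_eq, Finset.card_filter]
  calc ∑ S ∈ (univ : Finset V).powersetCard 4, (ES G S).offDiag.card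
      = ∑ p ∈ G.edgeFinset.offDiag, ∑ S ∈ (univ : Finset V).powersetCard 4,
          if ((∀ v ∈ p.1, v ∈ S) ∧ (∀ v ∈ p.2, v ∈ S)) then 1 else 0 := by
        simp_rw [h1]; exact Finset.sum_comm
    _ = ∑ p ∈ G.edgeFinset.offDiag, (((univ : Finset V).powersetCard 4).filter
          (fun S => (∀ v ∈ p.1, v ∈ S) ∧ (∀ v ∈ p.2, v ∈ S))).card := by
        simp_rw [Finset.card_filter]
    _ = _ := by
        rw [← Finset.sum_filter_add_sum_filter_not G.edgeFinset.offDiag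
          (fun p => ∃ v, v ∈ p.1 ∧ v ∈ p.2)]
        congr 1
        · rw [← Psh, Finset.sum_congr rfl (fun p hp => ?_), Finset.sum_const, smul_eq_mul,
            mul_comm]
          rw [Psh, Finset.mem_filter, Finset.mem_offDiag] at hp
          obtain ⟨⟨h1, h2, h3⟩, v, hv1, hv2⟩ := hp
          exact count_share G h1 h2 h3 hv1 hv2
        · rw [← Pdj, Finset.sum_congr rfl (fun p hp => ?_), Finset.sum_const, smul_eq_mul,
            mul_comm]
          rw [Pdj, Finset.mem_filter, Finset.mem_offDiag] at hp
          obtain ⟨⟨h1, h2, h3⟩, hn⟩ := hp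
          exact count_disj G h1 h2 hn

lemma Psh_card : (Psh G).card = ∑ v : V, (G.degree v * G.degree v - G.degree v) := by
  have heq : Psh G = (univ : Finset V).biUnion (fun v => (G.incidenceFinset v).offDiag) := by
    ext p
    simp only [Psh, Finset.mem_filter, Finset.mem_offDiag, Finset.mem_biUnion, Finset.mem_univ,
      true_and, SimpleGraph.incidenceFinset_eq_filter]
    constructor
    · rintro ⟨⟨h1, h2, h3⟩, v, hv1, hv2⟩
      exact ⟨v, ⟨h1, hv1⟩, ⟨h2, hv2⟩, h3⟩
    · rintro ⟨v, ⟨h1, hv1⟩, ⟨h2, hv2⟩, h3⟩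
      exact ⟨⟨h1, h2, h3⟩, v, hv1, hv2⟩
  rw [heq, Finset.card_biUnion]
  · refine Finset.sum_congr rfl (fun v _ => ?_)
    rw [Finset.offDiag_card, SimpleGraph.card_incidenceFinset_eq_degree]
  · intro x _ y _ hxy
    rw [Function.onFun_apply, Finset.disjoint_left]
    intro p hp1 hp2
    rw [Finset.mem_offDiag, SimpleGraph.incidenceFinset_eq_filter] at hp1 hp2
    simp only [Finset.mem_filter] at hp1 hp2
    have e1 : p.1 = s(x, y) := sym2_eq_of_two_mem hxy hp1.1.2 hp2.1.2
    have e2 : p.2 = s(x, y) := sym2_eq_of_two_mem hxy hp1.2.1.2 hp2.2.1.2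
    exact hp1.2.2 (e1.trans e2.symm)

lemma no_triangle (htf : G.CliqueFree 3) {a b c : V} (hab : G.Adj a b) (hac : G.Adj a c)
    (hbc : G.Adj b c) : False :=
  htf {a, b, c} (SimpleGraph.is3Clique_triple_iff.2 ⟨hab, hac, hbc⟩)

/-- 4-sets spanning exactly 3 edges, all through a common vertex -/
def StarSets : Finset (Finset V) := ((univ : Finset V).powersetCard 4).filter
  (fun S => (ES G S).card = 3 ∧ ∃ c ∈ S, ∀ e ∈ ES G S, c ∈ e)

/-- 4-sets spanning exactly 3 edges, with no common vertex -/
def PathSets : Finset (Finset V) := ((univ : Finset V).powersetCard 4).filter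
  (fun S => (ES G S).card = 3 ∧ ¬ ∃ c ∈ S, ∀ e ∈ ES G S, c ∈ e)

/-- 4-sets spanning at least 4 edges -/
def CycSets : Finset (Finset V) := ((univ : Finset V).powersetCard 4).filter
  (fun S => 4 ≤ (ES G S).card)

lemma star_path_split :
    (((univ : Finset V).powersetCard 4).filter (fun S => (ES G S).card = 3)).card
      = (StarSets G).card + (PathSets G).card := by
  rw [StarSets, PathSets, ← Finset.filter_filter, ← Finset.filter_filter,
    Finset.card_filter_add_card_filter_not]

lemma star_ES (htf : G.CliqueFree 3) {c : V} {A : Finset V}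
    (hA : A ⊆ G.neighborFinset c) :
    ES G (insert c A) = A.image (fun a => s(c, a)) := by
  ext e
  constructor
  · intro he
    rw [mem_ES] at he
    obtain ⟨he1, he2⟩ := he
    induction e with
    | _ x y =>
      have hadj : G.Adj x y := by rwa [SimpleGraph.mem_edgeFinset, SimpleGraph.mem_edgeSet] at he1
      have hx : x ∈ insert c A := he2 x (by simp)
      have hy : y ∈ insert c A := he2 y (by simp)
      rw [Finset.mem_insert] at hx hy
      rcases hx with rfl | hx
      · rcases hy with rfl | hy
        · exact absurd rfl hadj.ne
        · exact Finset.mem_image.2 ⟨y, hy, rfl⟩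
      · rcases hy with rfl | hy
        · rw [Sym2.eq_swap]
          exact Finset.mem_image.2 ⟨x, hx, rfl⟩
        · exact absurd (no_triangle G htf
            ((G.mem_neighborFinset c x).1 (hA hx))
            ((G.mem_neighborFinset c y).1 (hA hy)) hadj) not_false
  · intro he
    obtain ⟨a, ha, rfl⟩ := Finset.mem_image.1 he
    exact adj_mem_ES G ((G.mem_neighborFinset c a).1 (hA ha))
      (Finset.mem_insert_self c A) (Finset.mem_insert_of_mem ha)

lemma stars_lower_bound (htf : G.CliqueFree 3) (r : ℕ) (hreg : G.IsRegularOfDegree r) :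
    Fintype.card V * r.choose 3 ≤ (StarSets G).card := by
  have key : ∀ c : V, ∀ A ∈ (G.neighborFinset c).powersetCard 3,
      (insert c A ∈ StarSets G) ∧ c ∉ A ∧ ES G (insert c A) = A.image (fun a => s(c, a)) := by
    intro c A hA
    rw [Finset.mem_powersetCard] at hA
    obtain ⟨hsub, hcard⟩ := hA
    have hcA : c ∉ A := fun h => G.irrefl ((G.mem_neighborFinset c c).1 (hsub h))
    have hES := star_ES G htf hsub
    have hinj : Set.InjOn (fun a => s(c, a)) A := by
      intro a ha b hb hab
      rcases Sym2.eq_iff.1 hab with ⟨_, h⟩ | ⟨h1, h2⟩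
      · exact h
      · exact absurd (Finset.mem_coe.1 (h1 ▸ hb)) hcA
    have hEScard : (ES G (insert c A)).card = 3 := by
      rw [hES, Finset.card_image_of_injOn hinj, hcard]
    refine ⟨?_, hcA, hES⟩
    rw [StarSets, Finset.mem_filter, Finset.mem_powersetCard]
    refine ⟨⟨Finset.subset_univ _, by rw [Finset.card_insert_of_notMem hcA, hcard]⟩,
      hEScard, c, Finset.mem_insert_self c A, ?_⟩
    intro e he
    rw [hES] at he
    obtain ⟨a, _, rfl⟩ := Finset.mem_image.1 he
    simp
  calc Fintype.card V * r.choose 3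
      = ((univ : Finset V).sigma (fun c => (G.neighborFinset c).powersetCard 3)).card := by
        rw [Finset.card_sigma]
        rw [Finset.sum_congr rfl (fun c _ => by
          rw [Finset.card_powersetCard, G.card_neighborFinset_eq_degree, hreg c])]
        rw [Finset.sum_const, smul_eq_mul, Finset.card_univ]
    _ ≤ (StarSets G).card := by
        apply Finset.card_le_card_of_injOn (fun p => insert p.1 p.2)
        · intro p hp
          rw [Finset.mem_coe, Finset.mem_sigma] at hp
          exact (key p.1 p.2 hp.2).1
        · intro p hp q hq heq
          simp only [Finset.coe_sigma, Set.mem_sigma_iff] at hp hq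
          have hp2 := Finset.mem_coe.1 hp.2
          have hq2 := Finset.mem_coe.1 hq.2
          obtain ⟨hp1, hcA, hpES⟩ := key p.1 p.2 hp2
          obtain ⟨hq1, hcA', hqES⟩ := key q.1 q.2 hq2
          simp only at heq
          have hcc : p.1 = q.1 := by
            by_contra hcc
            have hA3 : p.2.card = 3 := (Finset.mem_powersetCard.1 hp2).2
            have : 2 ≤ (p.2.erase q.1).card := by
              have := Finset.card_erase_le (a := q.1) (s := p.2)
              have h2 := Finset.pred_card_le_card_erase (a := q.1) (s := p.2)
              omega
            have hne : (p.2.erase q.1).Nonempty := Finset.card_pos.1 (by omega)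
            obtain ⟨a, ha⟩ := hne
            have haA : a ∈ p.2 := Finset.mem_of_mem_erase ha
            have haq : a ≠ q.1 := Finset.ne_of_mem_erase ha
            have hmem : s(p.1, a) ∈ ES G (insert p.1 p.2) := by
              rw [hpES]; exact Finset.mem_image.2 ⟨a, haA, rfl⟩
            rw [heq, hqES] at hmem
            obtain ⟨b, _, hb⟩ := Finset.mem_image.1 hmem
            rcases Sym2.eq_iff.1 hb with ⟨h1, _⟩ | ⟨h1, h2⟩
            · exact hcc h1.symm
            · exact haq h1.symm
          have : p.2 = q.2 := by
            have h1 : p.2 = (insert p.1 p.2).erase p.1 := by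
              rw [Finset.erase_insert hcA]
            have h2 : q.2 = (insert q.1 q.2).erase q.1 := by
              rw [Finset.erase_insert hcA']
            rw [h1, h2, heq, hcc]
          exact Sigma.ext hcc (heq_of_eq this)

/-- labelled path tuples ⟨u, v, (x, y)⟩ representing paths x-u-v-y -/
abbrev Tup (V : Type*) := (_ : V) × (_ : V) × V × V

def PT : Finset (Tup V) := (univ : Finset V).sigma (fun u => (G.neighborFinset u).sigma
  (fun v => ((G.neighborFinset u).erase v) ×ˢ ((G.neighborFinset v).erase u)))

def img (w : Tup V) : Finset V := insert w.2.2.1 (insert w.1 (insert w.2.1 {w.2.2.2}))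

lemma mem_PT {u v x y : V} : (⟨u, v, (x, y)⟩ : Tup V) ∈ PT G ↔
    G.Adj u v ∧ G.Adj u x ∧ G.Adj v y ∧ x ≠ v ∧ y ≠ u := by
  simp only [PT, Finset.mem_sigma, Finset.mem_product, Finset.mem_erase,
    SimpleGraph.mem_neighborFinset, Finset.mem_univ, true_and]
  tauto

lemma card_PT (r : ℕ) (hreg : G.IsRegularOfDegree r) :
    (PT G).card = Fintype.card V * (r * ((r - 1) * (r - 1))) := by
  rw [PT, Finset.card_sigma]
  have h1 : ∀ u : V, ((G.neighborFinset u).sigma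
      (fun v => ((G.neighborFinset u).erase v) ×ˢ ((G.neighborFinset v).erase u))).card
      = r * ((r - 1) * (r - 1)) := by
    intro u
    rw [Finset.card_sigma]
    have h2 : ∀ v ∈ G.neighborFinset u,
        (((G.neighborFinset u).erase v) ×ˢ ((G.neighborFinset v).erase u)).card
          = (r - 1) * (r - 1) := by
      intro v hv
      rw [Finset.card_product, Finset.card_erase_of_mem hv,
        Finset.card_erase_of_mem ((G.mem_neighborFinset v u).2
          ((G.mem_neighborFinset u v).1 hv).symm),
        G.card_neighborFinset_eq_degree, G.card_neighborFinset_eq_degree, hreg u, hreg v]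
    rw [Finset.sum_congr rfl h2, Finset.sum_const, smul_eq_mul,
      G.card_neighborFinset_eq_degree, hreg u]
  rw [Finset.sum_congr rfl (fun u _ => h1 u), Finset.sum_const, smul_eq_mul, Finset.card_univ]

lemma PT_facts (htf : G.CliqueFree 3) {u v x y : V} (h : (⟨u, v, (x, y)⟩ : Tup V) ∈ PT G) :
    G.Adj u v ∧ G.Adj u x ∧ G.Adj v y ∧ u ≠ v ∧ x ≠ u ∧ x ≠ v ∧ y ≠ u ∧ y ≠ v ∧ x ≠ y := by
  rw [mem_PT] at h
  obtain ⟨huv, hux, hvy, hxv, hyu⟩ := h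
  refine ⟨huv, hux, hvy, huv.ne, hux.ne', hxv, hyu, hvy.ne', ?_⟩
  intro h
  subst h
  exact no_triangle G htf huv hux hvy

lemma img_card (htf : G.CliqueFree 3) {u v x y : V} (h : (⟨u, v, (x, y)⟩ : Tup V) ∈ PT G) :
    (img (⟨u, v, (x, y)⟩ : Tup V)).card = 4 := by
  obtain ⟨huv, hux, hvy, huvne, hxu, hxv, hyu, hyv, hxy⟩ := PT_facts G htf h
  rw [img]
  rw [Finset.card_insert_of_notMem (by simp [hxu, hxv, hxy]),
    Finset.card_insert_of_notMem (by simp [huvne, hyu.symm]),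
    Finset.card_insert_of_notMem (by simp [hyv.symm]), Finset.card_singleton]

lemma img_mem_T (htf : G.CliqueFree 3) {w : Tup V} (h : w ∈ PT G) :
    img w ∈ (univ : Finset V).powersetCard 4 := by
  obtain ⟨u, v, x, y⟩ := w
  rw [Finset.mem_powersetCard]
  exact ⟨Finset.subset_univ _, img_card G htf h⟩

lemma triple_sub_ES {u v x y : V} (h : (⟨u, v, (x, y)⟩ : Tup V) ∈ PT G) :
    ({s(x, u), s(u, v), s(v, y)} : Finset (Sym2 V)) ⊆ ES G (img (⟨u, v, (x, y)⟩ : Tup V)) := by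
  rw [mem_PT] at h
  obtain ⟨huv, hux, hvy, hxv, hyu⟩ := h
  intro e he
  simp only [Finset.mem_insert, Finset.mem_singleton] at he
  have hx : x ∈ img (⟨u, v, (x, y)⟩ : Tup V) := by simp [img]
  have hu : u ∈ img (⟨u, v, (x, y)⟩ : Tup V) := by simp [img]
  have hv : v ∈ img (⟨u, v, (x, y)⟩ : Tup V) := by simp [img]
  have hy : y ∈ img (⟨u, v, (x, y)⟩ : Tup V) := by simp [img]
  rcases he with rfl | rfl | rfl
  · exact adj_mem_ES G hux.symm hx hu
  · exact adj_mem_ES G huv hu hv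
  · exact adj_mem_ES G hvy hv hy

lemma triple_card (htf : G.CliqueFree 3) {u v x y : V} (h : (⟨u, v, (x, y)⟩ : Tup V) ∈ PT G) :
    ({s(x, u), s(u, v), s(v, y)} : Finset (Sym2 V)).card = 3 := by
  obtain ⟨huv, hux, hvy, huvne, hxu, hxv, hyu, hyv, hxy⟩ := PT_facts G htf h
  rw [Finset.card_insert_of_notMem (by simp [Sym2.eq_iff]; tauto),
    Finset.card_insert_of_notMem (by simp [Sym2.eq_iff]; tauto), Finset.card_singleton]

lemma ES_img_ge (htf : G.CliqueFree 3) {w : Tup V} (h : w ∈ PT G) :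
    3 ≤ (ES G (img w)).card := by
  obtain ⟨u, v, x, y⟩ := w
  rw [← triple_card G htf h]
  exact Finset.card_le_card (triple_sub_ES G h)

lemma img_mem_union (htf : G.CliqueFree 3) {w : Tup V} (h : w ∈ PT G) :
    img w ∈ PathSets G ∨ img w ∈ CycSets G := by
  have h3 := ES_img_ge G htf h
  have hT := img_mem_T G htf h
  rcases Nat.lt_or_ge (ES G (img w)).card 4 with h4 | h4
  · left
    obtain ⟨u, v, x, y⟩ := w
    obtain ⟨huv, hux, hvy, huvne, hxu, hxv, hyu, hyv, hxy⟩ := PT_facts G htf h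
    rw [PathSets, Finset.mem_filter]
    refine ⟨hT, by omega, ?_⟩
    rintro ⟨c, hc, hcall⟩
    have h1 := hcall _ (triple_sub_ES G h (by simp : s(x, u) ∈ _))
    have h2 := hcall _ (triple_sub_ES G h (by simp : s(u, v) ∈ _))
    have h3' := hcall _ (triple_sub_ES G h (by simp : s(v, y) ∈ _))
    rw [Sym2.mem_iff] at h1 h2 h3'
    rcases h1 with rfl | rfl
    · rcases h2 with h | h
      · exact hxu h
      · exact hxv h
    · rcases h3' with h | h
      · exact huvne h
      · exact hyu h.symm
  · right
    rw [CycSets, Finset.mem_filter]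
    exact ⟨hT, h4⟩

lemma fiber_path_le (htf : G.CliqueFree 3) {S : Finset V} (hS : S ∈ PathSets G) :
    ((PT G).filter (fun w => img w = S)).card ≤ 2 := by
  rcases Finset.eq_empty_or_nonempty ((PT G).filter (fun w => img w = S)) with he | hne
  · simp [he]
  obtain ⟨w₀, hw₀⟩ := hne
  obtain ⟨u, v, x, y⟩ := w₀
  rw [Finset.mem_filter] at hw₀
  obtain ⟨hPT, himg⟩ := hw₀
  obtain ⟨huv, hux, hvy, huvne, hxu, hxv, hyu, hyv, hxy⟩ := PT_facts G htf hPT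
  have hS3 : (ES G S).card = 3 := by
    rw [PathSets, Finset.mem_filter] at hS
    exact hS.2.1
  have hES : ES G S = {s(x, u), s(u, v), s(v, y)} := by
    rw [← himg]
    refine (Finset.eq_of_subset_of_card_le (triple_sub_ES G hPT) ?_).symm
    rw [triple_card G htf hPT, himg, hS3]
  have hxS : x ∈ S := by rw [← himg]; simp [img]
  have huS : u ∈ S := by rw [← himg]; simp [img]
  have hvS : v ∈ S := by rw [← himg]; simp [img]
  have hyS : y ∈ S := by rw [← himg]; simp [img]
  have hnxv : ¬ G.Adj x v := by
    intro hadj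
    have := adj_mem_ES G hadj hxS hvS
    rw [hES] at this
    simp only [Finset.mem_insert, Finset.mem_singleton, Sym2.eq_iff] at this
    rcases this with ⟨_, h⟩ | ⟨h, _⟩ | ⟨h, _⟩ | ⟨_, h⟩ | ⟨h, _⟩ | ⟨_, h⟩ <;> simp_all
  have hnuy : ¬ G.Adj u y := by
    intro hadj
    have := adj_mem_ES G hadj huS hyS
    rw [hES] at this
    simp only [Finset.mem_insert, Finset.mem_singleton, Sym2.eq_iff] at this
    rcases this with ⟨_, h⟩ | ⟨h, _⟩ | ⟨h, _⟩ | ⟨_, h⟩ | ⟨h, _⟩ | ⟨_, h⟩ <;> simp_all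
  have hnxy : ¬ G.Adj x y := by
    intro hadj
    have := adj_mem_ES G hadj hxS hyS
    rw [hES] at this
    simp only [Finset.mem_insert, Finset.mem_singleton, Sym2.eq_iff] at this
    rcases this with ⟨_, h⟩ | ⟨h, _⟩ | ⟨h, _⟩ | ⟨_, h⟩ | ⟨h, _⟩ | ⟨_, h⟩ <;> simp_all
  have hsub : (PT G).filter (fun w => img w = S)
      ⊆ ({⟨u, v, (x, y)⟩, ⟨v, u, (y, x)⟩} : Finset (Tup V)) := by
    intro w' hw'
    obtain ⟨u', v', x', y'⟩ := w'
    rw [Finset.mem_filter] at hw'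
    obtain ⟨hPT', himg'⟩ := hw'
    obtain ⟨huv', hux', hvy', huvne', hxu', hxv', hyu', hyv', hxy'⟩ := PT_facts G htf hPT'
    have hmem : ∀ z : V, z ∈ img (⟨u', v', (x', y')⟩ : Tup V) →
        z = x ∨ z = u ∨ z = v ∨ z = y := by
      intro z hz
      rw [himg', ← himg] at hz
      simpa [img] using hz
    have hu' := hmem u' (by simp [img])
    have hv' := hmem v' (by simp [img])
    have hx' := hmem x' (by simp [img])
    have hy' := hmem y' (by simp [img])
    have huvs := huv.symm
    have huxs := hux.symm
    have hvys := hvy.symm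
    have hnvx : ¬ G.Adj v x := fun h => hnxv h.symm
    have hnyu : ¬ G.Adj y u := fun h => hnuy h.symm
    have hnyx : ¬ G.Adj y x := fun h => hnxy h.symm
    have hne1 : u ≠ x := hxu.symm
    have hne2 : v ≠ x := hxv.symm
    have hne3 : u ≠ y := hyu.symm
    have hne4 : v ≠ y := hyv.symm
    have hne5 : v ≠ u := huvne.symm
    have hne6 : y ≠ x := hxy.symm
    clear hmem himg himg' hES hS3 hS hPT hPT'
    rcases hu' with rfl | rfl | rfl | rfl <;> rcases hv' with rfl | rfl | rfl | rfl <;>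
      rcases hx' with rfl | rfl | rfl | rfl <;> rcases hy' with rfl | rfl | rfl | rfl <;>
      first
      | exact absurd rfl huvne'
      | exact absurd rfl hxu'
      | exact absurd rfl hxv'
      | exact absurd rfl hyu'
      | exact absurd rfl hyv'
      | exact absurd rfl hxy'
      | exact absurd huv' (G.loopless _)
      | exact absurd hux' (G.loopless _)
      | exact absurd hvy' (G.loopless _)
      | exact absurd huv' hnxv
      | exact absurd huv' hnvx
      | exact absurd huv' hnuy
      | exact absurd huv' hnyu
      | exact absurd huv' hnxy
      | exact absurd huv' hnyx
      | exact absurd hux' hnxv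
      | exact absurd hux' hnvx
      | exact absurd hux' hnuy
      | exact absurd hux' hnyu
      | exact absurd hux' hnxy
      | exact absurd hux' hnyx
      | exact absurd hvy' hnxv
      | exact absurd hvy' hnvx
      | exact absurd hvy' hnuy
      | exact absurd hvy' hnyu
      | exact absurd hvy' hnxy
      | exact absurd hvy' hnyx
      | exact Finset.mem_insert_self _ _
      | exact Finset.mem_insert_of_mem (Finset.mem_singleton_self _)
  refine (Finset.card_le_card hsub).trans ?_
  refine (Finset.card_insert_le _ _).trans ?_
  simp

lemma card_eq_four' {s : Finset V} (h : s.card = 4) :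
    ∃ a b c d : V, a ≠ b ∧ a ≠ c ∧ a ≠ d ∧ b ≠ c ∧ b ≠ d ∧ c ≠ d ∧ s = {a, b, c, d} := by
  obtain ⟨a, t, hat, rfl, ht⟩ := Finset.card_eq_succ.1 h
  obtain ⟨b, c, d, hbc, hbd, hcd, rfl⟩ := Finset.card_eq_three.1 ht
  simp only [Finset.mem_insert, Finset.mem_singleton, not_or] at hat
  exact ⟨a, b, c, d, hat.1, hat.2.1, hat.2.2, hbc, hbd, hcd, rfl⟩

lemma card_filter_insert_le (p : Sym2 V → Prop) [DecidablePred p] (a : Sym2 V)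
    (s : Finset (Sym2 V)) :
    ((insert a s).filter p).card ≤ (if p a then 1 else 0) + (s.filter p).card := by
  rw [Finset.filter_insert]
  split_ifs with h
  · exact (Finset.card_insert_le _ _).trans (by omega)
  · omega

lemma cyc_structure (htf : G.CliqueFree 3) {S : Finset V} (hS : S ∈ CycSets G) :
    ∃ a b c d : V, S = {a, b, c, d}
      ∧ (a ≠ b ∧ a ≠ c ∧ a ≠ d ∧ b ≠ c ∧ b ≠ d ∧ c ≠ d)
      ∧ G.Adj a b ∧ G.Adj b c ∧ G.Adj c d ∧ G.Adj d a ∧ ¬ G.Adj a c ∧ ¬ G.Adj b d := by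
  rw [CycSets, Finset.mem_filter, Finset.mem_powersetCard] at hS
  obtain ⟨⟨-, hcard⟩, hS4⟩ := hS
  obtain ⟨a, b, c, d, hab, hac, had, hbc, hbd, hcd, rfl⟩ := card_eq_four' hcard
  have hsub : ES G ({a, b, c, d} : Finset V)
      ⊆ ({s(a,b), s(a,c), s(a,d), s(b,c), s(b,d), s(c,d)} : Finset (Sym2 V)) := by
    intro e he
    rw [mem_ES] at he
    obtain ⟨he1, he2⟩ := he
    induction e with
    | _ p q =>
      have hadj : G.Adj p q := by rwa [SimpleGraph.mem_edgeFinset, SimpleGraph.mem_edgeSet] at he1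
      have hp : p = a ∨ p = b ∨ p = c ∨ p = d := by simpa using he2 p (by simp)
      have hq : q = a ∨ q = b ∨ q = c ∨ q = d := by simpa using he2 q (by simp)
      rcases hp with rfl | rfl | rfl | rfl <;> rcases hq with rfl | rfl | rfl | rfl <;>
        first
        | exact absurd hadj G.irrefl
        | simp [Sym2.eq_iff]
  have hES : ES G ({a, b, c, d} : Finset V)
      = ({s(a,b), s(a,c), s(a,d), s(b,c), s(b,d), s(c,d)} : Finset (Sym2 V)).filter
          (fun e => e ∈ G.edgeFinset) := by
    apply Finset.Subset.antisymm
    · intro e he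
      exact Finset.mem_filter.2 ⟨hsub he, (Finset.mem_filter.1 he).1⟩
    · intro e he
      rw [Finset.mem_filter] at he
      obtain ⟨heB, hee⟩ := he
      rw [mem_ES]
      refine ⟨hee, ?_⟩
      intro z hz
      simp only [Finset.mem_insert, Finset.mem_singleton] at heB
      rcases heB with rfl | rfl | rfl | rfl | rfl | rfl <;>
        rcases Sym2.mem_iff.1 hz with rfl | rfl <;> simp
  have hle : 4 ≤ (if G.Adj a b then 1 else 0) + ((if G.Adj a c then 1 else 0)
      + ((if G.Adj a d then 1 else 0) + ((if G.Adj b c then 1 else 0)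
      + ((if G.Adj b d then 1 else 0) + (if G.Adj c d then 1 else 0))))) := by
    refine le_trans hS4 ?_
    rw [hES]
    have conv : ∀ p q : V, (if s(p, q) ∈ G.edgeFinset then 1 else 0)
        = (if G.Adj p q then 1 else 0) := by
      intro p q
      simp [SimpleGraph.mem_edgeFinset, SimpleGraph.mem_edgeSet]
    refine (card_filter_insert_le _ _ _).trans ?_
    rw [conv]
    refine Nat.add_le_add_left ?_ _
    refine (card_filter_insert_le _ _ _).trans ?_
    rw [conv]
    refine Nat.add_le_add_left ?_ _
    refine (card_filter_insert_le _ _ _).trans ?_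
    rw [conv]
    refine Nat.add_le_add_left ?_ _
    refine (card_filter_insert_le _ _ _).trans ?_
    rw [conv]
    refine Nat.add_le_add_left ?_ _
    refine (card_filter_insert_le _ _ _).trans ?_
    rw [conv]
    refine Nat.add_le_add_left ?_ _
    rw [Finset.filter_singleton]
    by_cases h : G.Adj c d
    · rw [if_pos (by simp [SimpleGraph.mem_edgeSet, h]), if_pos h]
      simp
    · rw [if_neg (by simp [SimpleGraph.mem_edgeSet, h]), if_neg h]
      simp
  by_cases h1 : G.Adj a b <;> by_cases h2 : G.Adj a c <;> by_cases h3 : G.Adj a d <;>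
    by_cases h4 : G.Adj b c <;> by_cases h5 : G.Adj b d <;> by_cases h6 : G.Adj c d <;>
    simp only [h1, h2, h3, h4, h5, h6, if_true, if_false, ite_true, ite_false,
      eq_self_iff_true, not_true, not_false_iff] at hle <;>
    first
    | omega
    | exact absurd (no_triangle G htf h1 h2 h4) not_false
    | exact absurd (no_triangle G htf h1 h3 h5) not_false
    | exact absurd (no_triangle G htf h2 h3 h6) not_false
    | exact absurd (no_triangle G htf h4 h5 h6) not_false
    | exact ⟨a, b, c, d, rfl, ⟨hab, hac, had, hbc, hbd, hcd⟩, h1, h4, h6, h3.symm, h2, h5⟩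
    | exact ⟨a, c, b, d, congrArg (insert a) (Finset.insert_comm b c {d}),
        ⟨hac, hab, had, hbc.symm, hcd, hbd⟩, h2, h4.symm, h5, h3.symm, h1, h6⟩
    | exact ⟨b, a, c, d, Finset.insert_comm a b {c, d},
        ⟨hab.symm, hbc, hbd, hac, had, hcd⟩, h1.symm, h2, h6, h5.symm, h4, h3⟩

lemma fiber_cyc_le (htf : G.CliqueFree 3) {S : Finset V} (hS : S ∈ CycSets G) :
    ((PT G).filter (fun w => img w = S)).card ≤ 8 := by
  obtain ⟨a, b, c, d, hSeq, ⟨hab, hac, had, hbc, hbd, hcd⟩,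
    ha1, ha2, ha3, ha4, hnac, hnbd⟩ := cyc_structure G htf hS
  have hE8 : (({⟨a, b, (d, c)⟩, ⟨b, a, (c, d)⟩, ⟨b, c, (a, d)⟩, ⟨c, b, (d, a)⟩,
      ⟨c, d, (b, a)⟩, ⟨d, c, (a, b)⟩, ⟨d, a, (c, b)⟩, ⟨a, d, (b, c)⟩} : Finset (Tup V))).card
      ≤ 8 := by
    have : ({⟨a, b, (d, c)⟩, ⟨b, a, (c, d)⟩, ⟨b, c, (a, d)⟩, ⟨c, b, (d, a)⟩,
        ⟨c, d, (b, a)⟩, ⟨d, c, (a, b)⟩, ⟨d, a, (c, b)⟩, ⟨a, d, (b, c)⟩} : Finset (Tup V))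
        = ([⟨a, b, (d, c)⟩, ⟨b, a, (c, d)⟩, ⟨b, c, (a, d)⟩, ⟨c, b, (d, a)⟩,
        ⟨c, d, (b, a)⟩, ⟨d, c, (a, b)⟩, ⟨d, a, (c, b)⟩, ⟨a, d, (b, c)⟩] : List (Tup V)).toFinset := by
      simp
    rw [this]
    exact (List.toFinset_card_le _).trans (by simp)
  refine le_trans (Finset.card_le_card ?_) hE8
  intro w' hw'
  obtain ⟨u', v', x', y'⟩ := w'
  rw [Finset.mem_filter] at hw'
  obtain ⟨hPT', himg'⟩ := hw'
  obtain ⟨huv', hux', hvy', huvne', hxu', hxv', hyu', hyv', hxy'⟩ := PT_facts G htf hPT'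
  have hmem : ∀ z : V, z ∈ img (⟨u', v', (x', y')⟩ : Tup V) →
      z = a ∨ z = b ∨ z = c ∨ z = d := by
    intro z hz
    rw [himg', hSeq] at hz
    simpa using hz
  have hu' := hmem u' (by simp [img])
  have hv' := hmem v' (by simp [img])
  have hx' := hmem x' (by simp [img])
  have hy' := hmem y' (by simp [img])
  have hnca : ¬ G.Adj c a := fun h => hnac h.symm
  have hndb : ¬ G.Adj d b := fun h => hnbd h.symm
  clear hmem himg' hS hPT' hSeq
  rcases hu' with rfl | rfl | rfl | rfl <;> rcases hv' with rfl | rfl | rfl | rfl <;>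
    rcases hx' with rfl | rfl | rfl | rfl <;> rcases hy' with rfl | rfl | rfl | rfl <;>
    first
    | exact absurd rfl huvne'
    | exact absurd rfl hxu'
    | exact absurd rfl hxv'
    | exact absurd rfl hyu'
    | exact absurd rfl hyv'
    | exact absurd rfl hxy'
    | exact absurd huv' (G.loopless _)
    | exact absurd hux' (G.loopless _)
    | exact absurd hvy' (G.loopless _)
    | exact absurd huv' hnac
    | exact absurd huv' hnca
    | exact absurd huv' hnbd
    | exact absurd huv' hndb
    | exact absurd hux' hnac
    | exact absurd hux' hnca
    | exact absurd hux' hnbd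
    | exact absurd hux' hndb
    | exact absurd hvy' hnac
    | exact absurd hvy' hnca
    | exact absurd hvy' hnbd
    | exact absurd hvy' hndb
    | simp

set_option maxHeartbeats 1600000 in
lemma fiber_cyc_ge (htf : G.CliqueFree 3) {S : Finset V} (hS : S ∈ CycSets G) :
    8 ≤ ((PT G).filter (fun w => img w = S)).card := by
  obtain ⟨a, b, c, d, hSeq, ⟨hab, hac, had, hbc, hbd, hcd⟩,
    ha1, ha2, ha3, ha4, hnac, hnbd⟩ := cyc_structure G htf hS
  have hba := hab.symm; have hca := hac.symm; have hda := had.symm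
  have hcb := hbc.symm; have hdb := hbd.symm; have hdc := hcd.symm
  have hmemPT : ∀ p q x y : V, G.Adj p q → G.Adj p x → G.Adj q y → x ≠ q → y ≠ p →
      ({x, p, q, y} : Finset V) = ({a, b, c, d} : Finset V) →
      (⟨p, q, (x, y)⟩ : Tup V) ∈ (PT G).filter (fun w => img w = S) := by
    intro p q x y h1 h2 h3 h4 h5 h6
    refine Finset.mem_filter.2 ⟨(mem_PT G).2 ⟨h1, h2, h3, h4, h5⟩, ?_⟩
    rw [img, hSeq]
    exact h6
  have hsub : (({⟨a, b, (d, c)⟩, ⟨b, a, (c, d)⟩, ⟨b, c, (a, d)⟩, ⟨c, b, (d, a)⟩,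
      ⟨c, d, (b, a)⟩, ⟨d, c, (a, b)⟩, ⟨d, a, (c, b)⟩, ⟨a, d, (b, c)⟩} : Finset (Tup V)))
      ⊆ (PT G).filter (fun w => img w = S) := by
    intro w hw
    simp only [Finset.mem_insert, Finset.mem_singleton] at hw
    rcases hw with rfl | rfl | rfl | rfl | rfl | rfl | rfl | rfl
    · exact hmemPT a b d c ha1 ha4.symm ha2 hdb hca (by ext z; simp; try tauto)
    · exact hmemPT b a c d ha1.symm ha2 ha4.symm hca hdb (by ext z; simp; try tauto)
    · exact hmemPT b c a d ha2 ha1.symm ha3 hac hdb (by ext z; simp; try tauto)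
    · exact hmemPT c b d a ha2.symm ha3 ha1.symm hdb hac (by ext z; simp; try tauto)
    · exact hmemPT c d b a ha3 ha2.symm ha4 hbd hac (by ext z; simp; try tauto)
    · exact hmemPT d c a b ha3.symm ha4 ha2.symm hac hbd (by ext z; simp; try tauto)
    · exact hmemPT d a c b ha4 ha3.symm ha1 hca hbd (by ext z; simp; try tauto)
    · exact hmemPT a d b c ha4.symm ha1 ha3.symm hbd hca (by ext z; simp; try tauto)
  refine le_trans ?_ (Finset.card_le_card hsub)
  rw [Finset.card_insert_of_notMem (by simp [hab, hac, had, hbc, hbd, hcd, hba, hca, hda, hcb, hdb, hdc]),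
    Finset.card_insert_of_notMem (by simp [hab, hac, had, hbc, hbd, hcd, hba, hca, hda, hcb, hdb, hdc]),
    Finset.card_insert_of_notMem (by simp [hab, hac, had, hbc, hbd, hcd, hba, hca, hda, hcb, hdb, hdc]),
    Finset.card_insert_of_notMem (by simp [hab, hac, had, hbc, hbd, hcd, hba, hca, hda, hcb, hdb, hdc]),
    Finset.card_insert_of_notMem (by simp [hab, hac, had, hbc, hbd, hcd, hba, hca, hda, hcb, hdb, hdc]),
    Finset.card_insert_of_notMem (by simp [hab, hac, had, hbc, hbd, hcd, hba, hca, hda, hcb, hdb, hdc]),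
    Finset.card_insert_of_notMem (by simp [hab, hac, had, hbc, hbd, hcd, hba, hca, hda, hcb, hdb, hdc]),
    Finset.card_singleton]

lemma cyc_count (htf : G.CliqueFree 3) : 8 * (CycSets G).card ≤ (PT G).card := by
  calc 8 * (CycSets G).card = ∑ _S ∈ CycSets G, 8 := by rw [Finset.sum_const, smul_eq_mul, mul_comm]
    _ ≤ ∑ S ∈ CycSets G, ((PT G).filter (fun w => img w = S)).card :=
        Finset.sum_le_sum (fun S hS => fiber_cyc_ge G htf hS)
    _ = ((CycSets G).biUnion (fun S => (PT G).filter (fun w => img w = S))).card := by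
        rw [Finset.card_biUnion]
        intro x _ y _ hxy
        rw [Function.onFun_apply, Finset.disjoint_left]
        intro w hw1 hw2
        rw [Finset.mem_filter] at hw1 hw2
        exact hxy (hw1.2 ▸ hw2.2)
    _ ≤ (PT G).card := by
        apply Finset.card_le_card
        intro w hw
        obtain ⟨S, _, hw2⟩ := Finset.mem_biUnion.1 hw
        exact (Finset.mem_filter.1 hw2).1

lemma PT_le (htf : G.CliqueFree 3) :
    (PT G).card ≤ 2 * (PathSets G).card + 8 * (CycSets G).card := by
  rw [← Finset.card_filter_add_card_filter_not (s := PT G)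
    (p := fun w => img w ∈ PathSets G)]
  have h1 : ((PT G).filter (fun w => img w ∈ PathSets G)).card ≤ 2 * (PathSets G).card := by
    refine le_trans (Finset.card_le_mul_card_image (f := img) _ 2 ?_) ?_
    · intro S hSim
      obtain ⟨w, hw, hweq⟩ := Finset.mem_image.1 hSim
      rw [Finset.mem_filter] at hw
      have hSP : S ∈ PathSets G := hweq ▸ hw.2
      refine le_trans (Finset.card_le_card ?_) (fiber_path_le G htf hSP)
      intro w' hw'
      rw [Finset.mem_filter] at hw' ⊢
      exact ⟨(Finset.mem_filter.1 hw'.1).1, hw'.2⟩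
    · apply Nat.mul_le_mul_left
      apply Finset.card_le_card
      intro S hSim
      obtain ⟨w, hw, hweq⟩ := Finset.mem_image.1 hSim
      exact hweq ▸ (Finset.mem_filter.1 hw).2
  have h2 : ((PT G).filter (fun w => ¬ (img w ∈ PathSets G))).card
      ≤ 8 * (CycSets G).card := by
    refine le_trans (Finset.card_le_mul_card_image (f := img) _ 8 ?_) ?_
    · intro S hSim
      obtain ⟨w, hw, hweq⟩ := Finset.mem_image.1 hSim
      rw [Finset.mem_filter] at hw
      have hSC : S ∈ CycSets G := by
        rcases img_mem_union G htf hw.1 with h | h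
        · exact absurd (hweq ▸ h) (hweq ▸ hw.2)
        · exact hweq ▸ h
      refine le_trans (Finset.card_le_card ?_) (fiber_cyc_le G htf hSC)
      intro w' hw'
      rw [Finset.mem_filter] at hw' ⊢
      exact ⟨(Finset.mem_filter.1 hw'.1).1, hw'.2⟩
    · apply Nat.mul_le_mul_left
      apply Finset.card_le_card
      intro S hSim
      obtain ⟨w, hw, hweq⟩ := Finset.mem_image.1 hSim
      rw [Finset.mem_filter] at hw
      rcases img_mem_union G htf hw.1 with h | h
      · exact absurd (hweq ▸ h) (hweq ▸ hw.2)
      · exact hweq ▸ h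
  omega

lemma pointwise (e : ℕ) :
    (if e = 0 then (1:ℚ) else 0) ≤ 1 - (e:ℚ) + ((e:ℚ) * ((e:ℚ) - 1)) / 2
      - (if e = 3 then 1 else 0) - 3 * (if 4 ≤ e then 1 else 0) := by
  match e with
  | 0 => norm_num
  | 1 => norm_num
  | 2 => norm_num
  | 3 => norm_num
  | (k+4) =>
    rw [if_neg (by omega), if_neg (by omega), if_pos (by omega)]
    push_cast
    nlinarith [sq_nonneg (k:ℚ)]

lemma numIndep_eq : numIndep G 4
    = ∑ S ∈ (univ : Finset V).powersetCard 4, if (ES G S).card = 0 then 1 else 0 := by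
  rw [numIndep, Finset.card_filter]
  refine Finset.sum_congr rfl (fun S _ => ?_)
  by_cases h : ∀ u ∈ S, ∀ v ∈ S, ¬ G.Adj u v
  · rw [if_pos h, if_pos (by rw [Finset.card_eq_zero, ES_eq_empty_iff]; exact h)]
  · rw [if_neg h, if_neg (fun hc => h ((ES_eq_empty_iff G).1 (Finset.card_eq_zero.1 hc)))]

end Aux14

set_option maxHeartbeats 4000000 in
open Aux14 in
theorem stmt_14' {V : Type*} [Fintype V] [DecidableEq V] (G : SimpleGraph V) [DecidableRel G.Adj]
    (n r m : ℕ) (hr : 1 ≤ r) (hn : Fintype.card V = n) (hreg : G.IsRegularOfDegree r)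
    (htf : G.CliqueFree 3) (hm : G.edgeFinset.card = m) :
    (numIndep G 4 : ℚ) ≤
      (n.choose 4 : ℚ) - ((n - 2).choose 2 : ℚ) * m
        + (n : ℚ) * ((n : ℚ) - 3) * (r.choose 2 : ℚ) - (n : ℚ) * (r.choose 3 : ℚ)
        + (m : ℚ) * (((m : ℚ) - (r : ℚ) ^ 2) / 2 - ((r : ℚ) - 1) ^ 2 / 4) := by
  subst hn
  subst hm
  set n := Fintype.card V with hn
  set m := G.edgeFinset.card with hm
  set T := (univ : Finset V).powersetCard 4 with hT
  -- the five sums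
  have hA : ((T.card : ℚ)) = (n.choose 4 : ℚ) := by
    rw [hT, Finset.card_powersetCard, Finset.card_univ]
  have hB : ∑ S ∈ T, ((ES G S).card : ℚ) = (m : ℚ) * ((n - 2).choose 2 : ℚ) := by
    rw [← Nat.cast_sum]
    rw [sum_ES_card G]
    push_cast
    ring
  have hCpt : ∀ S : Finset V, ((ES G S).card : ℚ) * (((ES G S).card : ℚ) - 1)
      = ((ES G S).offDiag.card : ℚ) := by
    intro S
    rw [Finset.offDiag_card]
    rcases Nat.eq_zero_or_pos (ES G S).card with h | h
    · rw [h]; norm_num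
    · rw [Nat.cast_sub (Nat.le_mul_of_pos_left _ h)]
      push_cast
      ring
  have hC : ∑ S ∈ T, ((ES G S).card : ℚ) * (((ES G S).card : ℚ) - 1)
      = ((Psh G).card : ℚ) * ((n - 3 : ℕ) : ℚ) + ((Pdj G).card : ℚ) := by
    rw [Finset.sum_congr rfl (fun S _ => hCpt S), ← Nat.cast_sum, sum_ES_offDiag_card G]
    push_cast [Nat.choose_one_right, Nat.choose_zero_right]
    ring
  have hD : ∑ S ∈ T, (if (ES G S).card = 3 then (1:ℚ) else 0)
      = ((StarSets G).card : ℚ) + ((PathSets G).card : ℚ) := by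
    have : ∑ S ∈ T, (if (ES G S).card = 3 then (1:ℚ) else 0)
        = ((T.filter (fun S => (ES G S).card = 3)).card : ℚ) := by
      rw [Finset.card_filter]
      push_cast
      rfl
    rw [this, hT, star_path_split G]
    push_cast
    ring
  have hE : ∑ S ∈ T, (if 4 ≤ (ES G S).card then (1:ℚ) else 0) = ((CycSets G).card : ℚ) := by
    rw [CycSets, Finset.card_filter]
    push_cast
    rfl
  -- main summed inequality
  have hmain : (numIndep G 4 : ℚ) ≤ (n.choose 4 : ℚ) - (m : ℚ) * ((n - 2).choose 2 : ℚ)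
      + (((Psh G).card : ℚ) * ((n - 3 : ℕ) : ℚ) + ((Pdj G).card : ℚ)) / 2
      - (((StarSets G).card : ℚ) + ((PathSets G).card : ℚ)) - 3 * ((CycSets G).card : ℚ) := by
    have h0 : (numIndep G 4 : ℚ) = ∑ S ∈ T, (if (ES G S).card = 0 then (1:ℚ) else 0) := by
      rw [numIndep_eq G]
      push_cast
      rfl
    rw [h0]
    calc ∑ S ∈ T, (if (ES G S).card = 0 then (1:ℚ) else 0)
        ≤ ∑ S ∈ T, (1 - ((ES G S).card : ℚ)
            + (((ES G S).card : ℚ) * (((ES G S).card : ℚ) - 1)) / 2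
            - (if (ES G S).card = 3 then 1 else 0)
            - 3 * (if 4 ≤ (ES G S).card then 1 else 0)) :=
          Finset.sum_le_sum (fun S _ => pointwise _)
      _ = (T.card : ℚ) - (∑ S ∈ T, ((ES G S).card : ℚ))
            + (∑ S ∈ T, ((ES G S).card : ℚ) * (((ES G S).card : ℚ) - 1)) / 2
            - (∑ S ∈ T, (if (ES G S).card = 3 then (1:ℚ) else 0))
            - 3 * (∑ S ∈ T, (if 4 ≤ (ES G S).card then (1:ℚ) else 0)) := by
          rw [Finset.sum_sub_distrib, Finset.sum_sub_distrib, Finset.sum_add_distrib,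
            Finset.sum_sub_distrib, Finset.sum_const, Finset.sum_div, ← Finset.mul_sum]
          push_cast
          ring
      _ = _ := by rw [hA, hB, hC, hD, hE]
  -- numeric facts
  have hhandshake : (n : ℚ) * r = 2 * m := by
    have := G.sum_degrees_eq_twice_card_edges
    rw [Finset.sum_congr rfl (fun v _ => hreg v), Finset.sum_const, smul_eq_mul,
      Finset.card_univ, ← hn, ← hm] at this
    exact_mod_cast this
  have hpshn : (Psh G).card = n * (r * r - r) := by
    rw [Psh_card G, Finset.sum_congr rfl (fun v _ => by rw [hreg v]), Finset.sum_const,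
      smul_eq_mul, Finset.card_univ, hn]
  have hrr : ((r * r - r : ℕ) : ℚ) = (r:ℚ) * r - r := by
    rw [Nat.cast_sub (Nat.le_mul_of_pos_left _ hr)]
    push_cast; ring
  have hpshq : ((Psh G).card : ℚ) = (n:ℚ) * ((r:ℚ) * r - r) := by
    rw [hpshn]
    push_cast [hrr]
    ring
  have hcast3 : ((Psh G).card : ℚ) * ((n - 3 : ℕ) : ℚ) = ((Psh G).card : ℚ) * ((n:ℚ) - 3) := by
    rcases Nat.lt_or_ge n 3 with hlt | hge
    · have hp0 : (Psh G).card = 0 := by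
        rcases Nat.eq_zero_or_pos n with h0 | h0
        · rw [hpshn, h0, Nat.zero_mul]
        · have hne : Nonempty V := Fintype.card_pos_iff.1 (hn ▸ h0)
          obtain ⟨v⟩ := hne
          have hdeg := G.degree_lt_card_verts v
          rw [hreg v, ← hn] at hdeg
          have hr1 : r = 1 := by omega
          rw [hpshn, hr1]
          simp
      rw [hp0]
      push_cast
      ring
    · rw [Nat.cast_sub hge]
      push_cast
      ring
  have hpdjq : ((Pdj G).card : ℚ) = (m:ℚ) * m - m - ((Psh G).card : ℚ) := by
    have h2 : (Psh G).card + (Pdj G).card = m * m - m := by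
      rw [Psh_card_add_Pdj_card G]
    rcases Nat.eq_zero_or_pos m with h0 | h0
    · have hz : m * m - m = 0 := by rw [h0]
      rw [hz] at h2
      have hp0 : (Psh G).card = 0 := by omega
      have hd0 : (Pdj G).card = 0 := by omega
      rw [hp0, hd0, h0]
      norm_num
    · have h3 : m ≤ m * m := Nat.le_mul_of_pos_left _ h0
      have h4 : (((Psh G).card + (Pdj G).card : ℕ) : ℚ) = ((m * m - m : ℕ) : ℚ) := by
        exact_mod_cast h2
      rw [Nat.cast_sub h3] at h4
      push_cast at h4 ⊢
      linarith
  have hstars : (n:ℚ) * (r.choose 3 : ℚ) ≤ ((StarSets G).card : ℚ) := by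
    have h := stars_lower_bound G htf r hreg
    rw [← hn] at h
    exact_mod_cast h
  have hWq : ((PT G).card : ℚ) = (n:ℚ) * ((r:ℚ) * (((r:ℚ) - 1) * ((r:ℚ) - 1))) := by
    rw [card_PT G r hreg, ← hn]
    push_cast [Nat.cast_sub hr]
    ring
  have hPC : ((PT G).card : ℚ) ≤ 2 * ((PathSets G).card : ℚ) + 8 * ((CycSets G).card : ℚ) := by
    exact_mod_cast PT_le G htf
  have hCW : 8 * ((CycSets G).card : ℚ) ≤ ((PT G).card : ℚ) := by
    exact_mod_cast cyc_count G htf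
  -- combine
  have hkey : ((PathSets G).card : ℚ) + 3 * ((CycSets G).card : ℚ)
      ≥ (3/8) * ((PT G).card : ℚ) := by linarith
  rw [hcast3, hpshq, hpdjq] at hmain
  rw [hWq] at hkey
  rw [Nat.cast_choose_two ℚ r]
  have hring : ((n.choose 4 : ℕ) : ℚ) - (m:ℚ) * (((n-2).choose 2 : ℕ) : ℚ)
      + ((n:ℚ)*((r:ℚ)*(r:ℚ)-(r:ℚ))*((n:ℚ)-3) + ((m:ℚ)*(m:ℚ)-(m:ℚ)-(n:ℚ)*((r:ℚ)*(r:ℚ)-(r:ℚ))))/2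
      - (n:ℚ)*((r.choose 3 : ℕ) : ℚ) - (3/8)*((n:ℚ)*((r:ℚ)*(((r:ℚ)-1)*((r:ℚ)-1))))
      = ((n.choose 4 : ℕ) : ℚ) - (((n-2).choose 2 : ℕ) : ℚ)*(m:ℚ)
        + (n:ℚ)*((n:ℚ)-3)*((r:ℚ)*((r:ℚ)-1)/2) - (n:ℚ)*((r.choose 3 : ℕ) : ℚ)
        + (m:ℚ)*(((m:ℚ)-(r:ℚ)^2)/2 - ((r:ℚ)-1)^2/4) := by
    linear_combination (-(((r:ℚ)-1)/2) - (3/8)*((r:ℚ)-1)^2) * hhandshake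
  linarith [hmain, hkey, hstars, hring]

/-- Let `n, r ∈ ℕ` with `r ≥ 1`, let `G` be an `n`-vertex `r`-regular triangle-free
finite simple graph, and let `m = nr/2` be its number of edges.  Then, as rational numbers,
`i_4(G) ≤ C(n,4) − C(n−2,2)·m + n(n−3)·C(r,2) − n·C(r,3) + m·((m − r²)/2 − (r−1)²/4)`. -/
theorem stmt_14 {V : Type*} [Fintype V] [DecidableEq V] (G : SimpleGraph V) [DecidableRel G.Adj]
    (n r m : ℕ) (hr : 1 ≤ r) (hn : Fintype.card V = n) (hreg : G.IsRegularOfDegree r)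
    (htf : G.CliqueFree 3) (hm : G.edgeFinset.card = m) :
    (numIndep G 4 : ℚ) ≤
      (n.choose 4 : ℚ) - ((n - 2).choose 2 : ℚ) * m
        + (n : ℚ) * ((n : ℚ) - 3) * (r.choose 2 : ℚ) - (n : ℚ) * (r.choose 3 : ℚ)
        + (m : ℚ) * (((m : ℚ) - (r : ℚ) ^ 2) / 2 - ((r : ℚ) - 1) ^ 2 / 4) :=
  stmt_14' G n r m hr hn hreg htf hm
end

section
/- Let n, r ∈ ℕ with r ≥ 1, let G be an n-vertex r-regular triangle-free finite simple graph, and let m = nr/2 be its number of edges. Then, as rational numbers, (k_2⊎k_2)(G) − c_4(G) ≤ m·((m − r²)/2 − (r−1)²/4). -/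
open Finset

/-- `numInducedReg G k d` is the number of `k`-element vertex subsets `J` such that every vertex
of `J` has exactly `d` neighbours inside `J`, i.e. such that the induced subgraph `G[J]` is
`d`-regular.  In particular `numInducedReg G 3 2 = k₃(G)` (triangles),
`numInducedReg G 4 3 = k₄(G)`, `numInducedReg G 4 2 = c₄(G)` (a 2-regular graph on 4 vertices is
a 4-cycle), `numInducedReg G 4 1 = (k₂⊎k₂)(G)` (a 1-regular graph on 4 vertices is a perfect
matching), and `numInducedReg G 5 2 = c₅(G)` (a 2-regular graph on 5 vertices is a 5-cycle). -/
def numInducedReg {V : Type*} (G : SimpleGraph V) [Fintype V] [DecidableEq V] [DecidableRel G.Adj]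
    (k d : ℕ) : ℕ :=
  (((univ : Finset V).powersetCard k).filter
    fun J => ∀ v ∈ J, (J.filter fun u => G.Adj v u).card = d).card

set_option linter.unusedSectionVars false

section AuxStmt16




variable {V : Type*} [Fintype V] [DecidableEq V] (G : SimpleGraph V) [DecidableRel G.Adj]

/-- quadruples (a,b,c,d) with edges ab, cd and no other edges (induced matching). -/
def Aset : Finset (V×V×V×V) := univ.filter fun x =>
  G.Adj x.1 x.2.1 ∧ G.Adj x.2.2.1 x.2.2.2 ∧ ¬G.Adj x.1 x.2.2.1 ∧ ¬G.Adj x.1 x.2.2.2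
    ∧ ¬G.Adj x.2.1 x.2.2.1 ∧ ¬G.Adj x.2.1 x.2.2.2

/-- quadruples (a,b,c,d) inducing the path a-b-c-d. -/
def Bset : Finset (V×V×V×V) := univ.filter fun x =>
  G.Adj x.1 x.2.1 ∧ G.Adj x.2.1 x.2.2.1 ∧ G.Adj x.2.2.1 x.2.2.2 ∧ ¬G.Adj x.1 x.2.2.1
    ∧ ¬G.Adj x.1 x.2.2.2 ∧ ¬G.Adj x.2.1 x.2.2.2

/-- quadruples (a,b,c,d) inducing the cycle a-b-c-d-a. -/
def Cset : Finset (V×V×V×V) := univ.filter fun x =>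
  G.Adj x.1 x.2.1 ∧ G.Adj x.2.1 x.2.2.1 ∧ G.Adj x.2.2.1 x.2.2.2 ∧ G.Adj x.1 x.2.2.2
    ∧ ¬G.Adj x.1 x.2.2.1 ∧ ¬G.Adj x.2.1 x.2.2.2 ∧ x.1 ≠ x.2.2.1 ∧ x.2.1 ≠ x.2.2.2

/-- quadruples (a,b,c,d) of distinct vertices with edges ab and cd. -/
def Dset : Finset (V×V×V×V) := univ.filter fun x =>
  G.Adj x.1 x.2.1 ∧ G.Adj x.2.2.1 x.2.2.2 ∧ x.1 ≠ x.2.2.1 ∧ x.1 ≠ x.2.2.2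
    ∧ x.2.1 ≠ x.2.2.1 ∧ x.2.1 ≠ x.2.2.2

/-- quadruples (a,b,c,d) with edges ab, bc, cd, a≠c, b≠d (walks of length 3 w/o immediate repeats). -/
def Wset : Finset (V×V×V×V) := univ.filter fun x =>
  G.Adj x.1 x.2.1 ∧ G.Adj x.2.1 x.2.2.1 ∧ G.Adj x.2.2.1 x.2.2.2 ∧ x.1 ≠ x.2.2.1
    ∧ x.2.1 ≠ x.2.2.2

@[simp] lemma mem_Aset {a b c d : V} : (a,b,c,d) ∈ Aset G ↔
    G.Adj a b ∧ G.Adj c d ∧ ¬G.Adj a c ∧ ¬G.Adj a d ∧ ¬G.Adj b c ∧ ¬G.Adj b d := by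
  simp [Aset]

@[simp] lemma mem_Bset {a b c d : V} : (a,b,c,d) ∈ Bset G ↔
    G.Adj a b ∧ G.Adj b c ∧ G.Adj c d ∧ ¬G.Adj a c ∧ ¬G.Adj a d ∧ ¬G.Adj b d := by
  simp [Bset]

@[simp] lemma mem_Cset {a b c d : V} : (a,b,c,d) ∈ Cset G ↔
    G.Adj a b ∧ G.Adj b c ∧ G.Adj c d ∧ G.Adj a d ∧ ¬G.Adj a c ∧ ¬G.Adj b d ∧ a ≠ c ∧ b ≠ d := by
  simp [Cset]

@[simp] lemma mem_Dset {a b c d : V} : (a,b,c,d) ∈ Dset G ↔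
    G.Adj a b ∧ G.Adj c d ∧ a ≠ c ∧ a ≠ d ∧ b ≠ c ∧ b ≠ d := by
  simp [Dset]

@[simp] lemma mem_Wset {a b c d : V} : (a,b,c,d) ∈ Wset G ↔
    G.Adj a b ∧ G.Adj b c ∧ G.Adj c d ∧ a ≠ c ∧ b ≠ d := by
  simp [Wset]

lemma noTri (htf : G.CliqueFree 3) {a b c : V} (h1 : G.Adj a b) (h2 : G.Adj b c) :
    ¬ G.Adj a c := fun h3 =>
  htf {a,b,c} (SimpleGraph.is3Clique_iff.mpr ⟨a, b, c, h1, h3, h2, rfl⟩)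

lemma sum_quad {a b c d : V} (hab : a ≠ b) (hac : a ≠ c) (had : a ≠ d)
    (hbc : b ≠ c) (hbd : b ≠ d) (hcd : c ≠ d) (f : V → ℕ) :
    ∑ x ∈ ({a,b,c,d} : Finset V), f x = f a + f b + f c + f d := by
  rw [show ({a,b,c,d} : Finset V) = insert a (insert b (insert c {d})) from rfl,
    Finset.sum_insert (by simp [hab, hac, had]),
    Finset.sum_insert (by simp [hbc, hbd]),
    Finset.sum_insert (by simp [hcd]), Finset.sum_singleton]
  ring

lemma card_filter_quad {a b c d : V} (hab : a ≠ b) (hac : a ≠ c) (had : a ≠ d)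
    (hbc : b ≠ c) (hbd : b ≠ d) (hcd : c ≠ d) (p : V → Prop) [DecidablePred p] :
    (({a,b,c,d} : Finset V).filter p).card
      = (if p a then 1 else 0) + (if p b then 1 else 0) + (if p c then 1 else 0)
        + (if p d then 1 else 0) := by
  rw [Finset.card_filter, sum_quad hab hac had hbc hbd hcd]

lemma char1 {a b c d : V} (hab : a ≠ b) (hac : a ≠ c) (had : a ≠ d)
    (hbc : b ≠ c) (hbd : b ≠ d) (hcd : c ≠ d) :
    (∀ v ∈ ({a,b,c,d} : Finset V), (({a,b,c,d} : Finset V).filter (fun u => G.Adj v u)).card = 1)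
      ↔ ((a,b,c,d) ∈ Aset G ∨ (a,c,b,d) ∈ Aset G ∨ (a,d,b,c) ∈ Aset G) := by
  simp only [Finset.forall_mem_insert, Finset.mem_singleton, forall_eq, mem_Aset]
  rw [card_filter_quad hab hac had hbc hbd hcd, card_filter_quad hab hac had hbc hbd hcd,
    card_filter_quad hab hac had hbc hbd hcd, card_filter_quad hab hac had hbc hbd hcd]
  simp only [G.adj_comm b a, G.adj_comm c a, G.adj_comm c b, G.adj_comm d a, G.adj_comm d b,
    G.adj_comm d c, SimpleGraph.irrefl]
  by_cases h1 : G.Adj a b <;> by_cases h2 : G.Adj a c <;> by_cases h3 : G.Adj a d <;>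
    by_cases h4 : G.Adj b c <;> by_cases h5 : G.Adj b d <;> by_cases h6 : G.Adj c d <;>
    simp_all

lemma char2 {a b c d : V} (hab : a ≠ b) (hac : a ≠ c) (had : a ≠ d)
    (hbc : b ≠ c) (hbd : b ≠ d) (hcd : c ≠ d) :
    (∀ v ∈ ({a,b,c,d} : Finset V), (({a,b,c,d} : Finset V).filter (fun u => G.Adj v u)).card = 2)
      ↔ ((a,b,c,d) ∈ Cset G ∨ (a,c,b,d) ∈ Cset G ∨ (a,b,d,c) ∈ Cset G) := by
  simp only [Finset.forall_mem_insert, Finset.mem_singleton, forall_eq, mem_Cset]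
  rw [card_filter_quad hab hac had hbc hbd hcd, card_filter_quad hab hac had hbc hbd hcd,
    card_filter_quad hab hac had hbc hbd hcd, card_filter_quad hab hac had hbc hbd hcd]
  simp only [G.adj_comm b a, G.adj_comm c a, G.adj_comm c b, G.adj_comm d a, G.adj_comm d b,
    G.adj_comm d c, SimpleGraph.irrefl]
  by_cases h1 : G.Adj a b <;> by_cases h2 : G.Adj a c <;> by_cases h3 : G.Adj a d <;>
    by_cases h4 : G.Adj b c <;> by_cases h5 : G.Adj b d <;> by_cases h6 : G.Adj c d <;>
    simp_all

set_option maxHeartbeats 3200000 in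
lemma fiberA {a b c d : V} (h : (a,b,c,d) ∈ Aset G) :
    ((Aset G).filter fun x => ({x.1, x.2.1, x.2.2.1, x.2.2.2} : Finset V) = {a,b,c,d}).card
      = 8 := by
  obtain ⟨hab, hcd, h1, h2, h3, h4⟩ := (mem_Aset G).mp h
  have hab' := hab.symm
  have hcd' := hcd.symm
  have h1' : ¬G.Adj c a := fun t => h1 t.symm
  have h2' : ¬G.Adj d a := fun t => h2 t.symm
  have h3' : ¬G.Adj c b := fun t => h3 t.symm
  have h4' : ¬G.Adj d b := fun t => h4 t.symm
  have nab : a ≠ b := hab.ne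
  have ncd : c ≠ d := hcd.ne
  have nac : a ≠ c := by rintro rfl; exact h2 hcd
  have nad : a ≠ d := by rintro rfl; exact h1 hcd.symm
  have nbc : b ≠ c := by rintro rfl; exact h4 hcd
  have nbd : b ≠ d := by rintro rfl; exact h3 hcd.symm
  have key : ((Aset G).filter fun x => ({x.1, x.2.1, x.2.2.1, x.2.2.2} : Finset V) = {a,b,c,d})
      = ({(a,b,c,d),(b,a,c,d),(a,b,d,c),(b,a,d,c),(c,d,a,b),(c,d,b,a),(d,c,a,b),(d,c,b,a)}
        : Finset (V×V×V×V)) := by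
    ext ⟨x,y,z,w⟩
    simp only [Finset.mem_filter, mem_Aset, Finset.mem_insert, Finset.mem_singleton,
      Prod.mk.injEq]
    constructor
    · rintro ⟨⟨hxy, hzw, g1, g2, g3, g4⟩, hset⟩
      have hx : x ∈ ({a,b,c,d} : Finset V) := by rw [← hset]; simp
      have hy : y ∈ ({a,b,c,d} : Finset V) := by rw [← hset]; simp
      have hz : z ∈ ({a,b,c,d} : Finset V) := by rw [← hset]; simp
      have hw : w ∈ ({a,b,c,d} : Finset V) := by rw [← hset]; simp
      simp only [Finset.mem_insert, Finset.mem_singleton] at hx hy hz hw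
      clear hset h
      have hxy' := hxy.symm
      have hzw' := hzw.symm
      have g1' : ¬G.Adj z x := fun t => g1 t.symm
      have g2' : ¬G.Adj w x := fun t => g2 t.symm
      have g3' : ¬G.Adj z y := fun t => g3 t.symm
      have g4' : ¬G.Adj w y := fun t => g4 t.symm
      have nxy : x ≠ y := hxy.ne
      have nzw : z ≠ w := hzw.ne
      have nxz : x ≠ z := by rintro rfl; exact g2 hzw
      have nxw : x ≠ w := by rintro rfl; exact g1 hzw.symm
      have nyz : y ≠ z := by rintro rfl; exact g4 hzw
      have nyw : y ≠ w := by rintro rfl; exact g3 hzw.symm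
      rcases hx with rfl|rfl|rfl|rfl <;> rcases hy with rfl|rfl|rfl|rfl <;>
        rcases hz with rfl|rfl|rfl|rfl <;> rcases hw with rfl|rfl|rfl|rfl <;> simp_all
    · have e1 : ({b,a,c,d} : Finset V) = {a,b,c,d} := by ext; simp; tauto
      have e2 : ({a,b,d,c} : Finset V) = {a,b,c,d} := by ext; simp; tauto
      have e3 : ({b,a,d,c} : Finset V) = {a,b,c,d} := by ext; simp; tauto
      have e4 : ({c,d,a,b} : Finset V) = {a,b,c,d} := by ext; simp; tauto
      have e5 : ({c,d,b,a} : Finset V) = {a,b,c,d} := by ext; simp; tauto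
      have e6 : ({d,c,a,b} : Finset V) = {a,b,c,d} := by ext; simp; tauto
      have e7 : ({d,c,b,a} : Finset V) = {a,b,c,d} := by ext; simp; tauto
      rintro (⟨rfl,rfl,rfl,rfl⟩|⟨rfl,rfl,rfl,rfl⟩|⟨rfl,rfl,rfl,rfl⟩|⟨rfl,rfl,rfl,rfl⟩|
        ⟨rfl,rfl,rfl,rfl⟩|⟨rfl,rfl,rfl,rfl⟩|⟨rfl,rfl,rfl,rfl⟩|⟨rfl,rfl,rfl,rfl⟩)
      · exact ⟨⟨hab, hcd, h1, h2, h3, h4⟩, rfl⟩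
      · exact ⟨⟨hab', hcd, h3, h4, h1, h2⟩, e1⟩
      · exact ⟨⟨hab, hcd', h2, h1, h4, h3⟩, e2⟩
      · exact ⟨⟨hab', hcd', h4, h3, h2, h1⟩, e3⟩
      · exact ⟨⟨hcd, hab, h1', h3', h2', h4'⟩, e4⟩
      · exact ⟨⟨hcd, hab', h3', h1', h4', h2'⟩, e5⟩
      · exact ⟨⟨hcd', hab, h2', h4', h1', h3'⟩, e6⟩
      · exact ⟨⟨hcd', hab', h4', h2', h3', h1'⟩, e7⟩
  rw [key]
  simp [Finset.card_insert_of_notMem, Finset.mem_insert, Prod.ext_iff, nab, nac, nad, nbc,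
    nbd, ncd, nab.symm, nac.symm, nad.symm, nbc.symm, nbd.symm, ncd.symm]

set_option maxHeartbeats 3200000 in
lemma fiberC {a b c d : V} (h : (a,b,c,d) ∈ Cset G) :
    ((Cset G).filter fun x => ({x.1, x.2.1, x.2.2.1, x.2.2.2} : Finset V) = {a,b,c,d}).card
      = 8 := by
  obtain ⟨hab, hbc, hcd, had, h1, h2, nac, nbd⟩ := (mem_Cset G).mp h
  have hab' := hab.symm
  have hbc' := hbc.symm
  have hcd' := hcd.symm
  have had' := had.symm
  have h1' : ¬G.Adj c a := fun t => h1 t.symm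
  have h2' : ¬G.Adj d b := fun t => h2 t.symm
  have nab : a ≠ b := hab.ne
  have nbc : b ≠ c := hbc.ne
  have ncd : c ≠ d := hcd.ne
  have nad : a ≠ d := had.ne
  have key : ((Cset G).filter fun x => ({x.1, x.2.1, x.2.2.1, x.2.2.2} : Finset V) = {a,b,c,d})
      = ({(a,b,c,d),(b,c,d,a),(c,d,a,b),(d,a,b,c),(a,d,c,b),(d,c,b,a),(c,b,a,d),(b,a,d,c)}
        : Finset (V×V×V×V)) := by
    ext ⟨x,y,z,w⟩
    simp only [Finset.mem_filter, mem_Cset, Finset.mem_insert, Finset.mem_singleton,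
      Prod.mk.injEq]
    constructor
    · rintro ⟨⟨hxy, hyz, hzw, hxw, g1, g2, nxz, nyw⟩, hset⟩
      have hx : x ∈ ({a,b,c,d} : Finset V) := by rw [← hset]; simp
      have hy : y ∈ ({a,b,c,d} : Finset V) := by rw [← hset]; simp
      have hz : z ∈ ({a,b,c,d} : Finset V) := by rw [← hset]; simp
      have hw : w ∈ ({a,b,c,d} : Finset V) := by rw [← hset]; simp
      simp only [Finset.mem_insert, Finset.mem_singleton] at hx hy hz hw
      clear hset h
      have hxy' := hxy.symm
      have hyz' := hyz.symm
      have hzw' := hzw.symm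
      have hxw' := hxw.symm
      have g1' : ¬G.Adj z x := fun t => g1 t.symm
      have g2' : ¬G.Adj w y := fun t => g2 t.symm
      have nxy : x ≠ y := hxy.ne
      have nyz : y ≠ z := hyz.ne
      have nzw : z ≠ w := hzw.ne
      have nxw : x ≠ w := hxw.ne
      rcases hx with rfl|rfl|rfl|rfl <;> rcases hy with rfl|rfl|rfl|rfl <;>
        rcases hz with rfl|rfl|rfl|rfl <;> rcases hw with rfl|rfl|rfl|rfl <;> simp_all
    · have e1 : ({b,c,d,a} : Finset V) = {a,b,c,d} := by ext; simp; tauto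
      have e2 : ({c,d,a,b} : Finset V) = {a,b,c,d} := by ext; simp; tauto
      have e3 : ({d,a,b,c} : Finset V) = {a,b,c,d} := by ext; simp; tauto
      have e4 : ({a,d,c,b} : Finset V) = {a,b,c,d} := by ext; simp; tauto
      have e5 : ({d,c,b,a} : Finset V) = {a,b,c,d} := by ext; simp; tauto
      have e6 : ({c,b,a,d} : Finset V) = {a,b,c,d} := by ext; simp; tauto
      have e7 : ({b,a,d,c} : Finset V) = {a,b,c,d} := by ext; simp; tauto
      rintro (⟨rfl,rfl,rfl,rfl⟩|⟨rfl,rfl,rfl,rfl⟩|⟨rfl,rfl,rfl,rfl⟩|⟨rfl,rfl,rfl,rfl⟩|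
        ⟨rfl,rfl,rfl,rfl⟩|⟨rfl,rfl,rfl,rfl⟩|⟨rfl,rfl,rfl,rfl⟩|⟨rfl,rfl,rfl,rfl⟩)
      · exact ⟨⟨hab, hbc, hcd, had, h1, h2, nac, nbd⟩, rfl⟩
      · exact ⟨⟨hbc, hcd, had', hab', h2, h1', nbd, nac.symm⟩, e1⟩
      · exact ⟨⟨hcd, had', hab, hbc', h1', h2', nac.symm, nbd.symm⟩, e2⟩
      · exact ⟨⟨had', hab, hbc, hcd', h2', h1, nbd.symm, nac⟩, e3⟩
      · exact ⟨⟨had, hcd', hbc', hab, h1, h2', nac, nbd.symm⟩, e4⟩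
      · exact ⟨⟨hcd', hbc', hab', had', h2', h1', nbd.symm, nac.symm⟩, e5⟩
      · exact ⟨⟨hbc', hab', had, hcd, h1', h2, nac.symm, nbd⟩, e6⟩
      · exact ⟨⟨hab', had, hcd', hbc, h2, h1, nbd, nac⟩, e7⟩
  rw [key]
  simp [Finset.card_insert_of_notMem, Finset.mem_insert, Prod.ext_iff, nab, nac, nad, nbc,
    nbd, ncd, nab.symm, nac.symm, nad.symm, nbc.symm, nbd.symm, ncd.symm]


lemma card_quad {a b c d : V} (hab : a ≠ b) (hac : a ≠ c) (had : a ≠ d)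
    (hbc : b ≠ c) (hbd : b ≠ d) (hcd : c ≠ d) : ({a,b,c,d} : Finset V).card = 4 := by
  simp [Finset.card_insert_of_notMem, Finset.mem_insert, hab, hac, had, hbc, hbd, hcd]

lemma Aset_card : (Aset G).card = 8 * numInducedReg G 4 1 := by
  rw [numInducedReg]
  have hmap : ∀ x ∈ Aset G, ({x.1, x.2.1, x.2.2.1, x.2.2.2} : Finset V) ∈
      ((univ : Finset V).powersetCard 4).filter
        (fun J => ∀ v ∈ J, (J.filter fun u => G.Adj v u).card = 1) := by
    rintro ⟨a,b,c,d⟩ hx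
    obtain ⟨hab, hcd, h1, h2, h3, h4⟩ := (mem_Aset G).mp hx
    have nab : a ≠ b := hab.ne
    have ncd : c ≠ d := hcd.ne
    have nac : a ≠ c := by rintro rfl; exact h2 hcd
    have nad : a ≠ d := by rintro rfl; exact h1 hcd.symm
    have nbc : b ≠ c := by rintro rfl; exact h4 hcd
    have nbd : b ≠ d := by rintro rfl; exact h3 hcd.symm
    refine Finset.mem_filter.mpr ⟨Finset.mem_powersetCard.mpr
      ⟨Finset.subset_univ _, card_quad nab nac nad nbc nbd ncd⟩, ?_⟩
    exact (char1 G nab nac nad nbc nbd ncd).mpr (Or.inl hx)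
  rw [Finset.card_eq_sum_card_fiberwise hmap]
  rw [Finset.sum_congr rfl (fun J hJ => ?_), Finset.sum_const, smul_eq_mul, mul_comm]
  obtain ⟨hJp, hJreg⟩ := Finset.mem_filter.mp hJ
  obtain ⟨-, hJ4⟩ := Finset.mem_powersetCard.mp hJp
  obtain ⟨a, t, hat, hins, ht3⟩ := Finset.card_eq_succ.mp hJ4
  obtain ⟨b, c, d, nbc, nbd, ncd, rfl⟩ := Finset.card_eq_three.mp ht3
  subst hins
  simp only [Finset.mem_insert, Finset.mem_singleton, not_or] at hat
  obtain ⟨nab, nac, nad⟩ := hat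
  rcases (char1 G nab nac nad nbc nbd ncd).mp hJreg with hp | hp | hp
  · exact fiberA G hp
  · have e : ({a,c,b,d} : Finset V) = {a,b,c,d} := by ext; simp; tauto
    rw [← e]
    exact fiberA G hp
  · have e : ({a,d,b,c} : Finset V) = {a,b,c,d} := by ext; simp; tauto
    rw [← e]
    exact fiberA G hp

lemma Cset_card : (Cset G).card = 8 * numInducedReg G 4 2 := by
  rw [numInducedReg]
  have hmap : ∀ x ∈ Cset G, ({x.1, x.2.1, x.2.2.1, x.2.2.2} : Finset V) ∈
      ((univ : Finset V).powersetCard 4).filter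
        (fun J => ∀ v ∈ J, (J.filter fun u => G.Adj v u).card = 2) := by
    rintro ⟨a,b,c,d⟩ hx
    obtain ⟨hab, hbc, hcd, had, h1, h2, nac, nbd⟩ := (mem_Cset G).mp hx
    have nab : a ≠ b := hab.ne
    have nbc : b ≠ c := hbc.ne
    have ncd : c ≠ d := hcd.ne
    have nad : a ≠ d := had.ne
    refine Finset.mem_filter.mpr ⟨Finset.mem_powersetCard.mpr
      ⟨Finset.subset_univ _, card_quad nab nac nad nbc nbd ncd⟩, ?_⟩
    exact (char2 G nab nac nad nbc nbd ncd).mpr (Or.inl hx)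
  rw [Finset.card_eq_sum_card_fiberwise hmap]
  rw [Finset.sum_congr rfl (fun J hJ => ?_), Finset.sum_const, smul_eq_mul, mul_comm]
  obtain ⟨hJp, hJreg⟩ := Finset.mem_filter.mp hJ
  obtain ⟨-, hJ4⟩ := Finset.mem_powersetCard.mp hJp
  obtain ⟨a, t, hat, hins, ht3⟩ := Finset.card_eq_succ.mp hJ4
  obtain ⟨b, c, d, nbc, nbd, ncd, rfl⟩ := Finset.card_eq_three.mp ht3
  subst hins
  simp only [Finset.mem_insert, Finset.mem_singleton, not_or] at hat
  obtain ⟨nab, nac, nad⟩ := hat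
  rcases (char2 G nab nac nad nbc nbd ncd).mp hJreg with hp | hp | hp
  · exact fiberC G hp
  · have e : ({a,c,b,d} : Finset V) = {a,b,c,d} := by ext; simp; tauto
    rw [← e]
    exact fiberC G hp
  · have e : ({a,b,d,c} : Finset V) = {a,b,c,d} := by ext; simp; tauto
    rw [← e]
    exact fiberC G hp

/-- ordered edges -/
def E2 : Finset (V×V) := (univ ×ˢ univ).filter fun p => G.Adj p.1 p.2

@[simp] lemma mem_E2 {a b : V} : (a,b) ∈ E2 G ↔ G.Adj a b := by simp [E2]

lemma card_E2 : (E2 G).card = 2 * G.edgeFinset.card := by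
  have hmap : ∀ p ∈ E2 G, p.1 ∈ (univ : Finset V) := fun p _ => Finset.mem_univ _
  rw [Finset.card_eq_sum_card_fiberwise hmap, ← SimpleGraph.sum_degrees_eq_twice_card_edges]
  refine Finset.sum_congr rfl fun a _ => ?_
  rw [← SimpleGraph.card_neighborFinset_eq_degree]
  apply Finset.card_nbij' (i := fun p => p.2) (j := fun v => (a, v))
  · rintro ⟨x,y⟩ hp
    simp only [Finset.mem_coe, Finset.mem_filter, mem_E2] at hp
    obtain ⟨h1, h2⟩ := hp
    subst h2
    simpa using h1
  · intro v hv
    simp only [Finset.mem_coe, SimpleGraph.mem_neighborFinset] at hv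
    simp [hv]
  · rintro ⟨x,y⟩ hp
    simp only [Finset.mem_coe, Finset.mem_filter, mem_E2] at hp
    simp [hp.2]
  · intro v hv
    rfl

lemma card_Wset {r : ℕ} (hreg : G.IsRegularOfDegree r) :
    (Wset G).card = 2 * G.edgeFinset.card * ((r-1) * (r-1)) := by
  have hmap : ∀ x ∈ Wset G, ((x.2.1, x.2.2.1) : V×V) ∈ E2 G := by
    rintro ⟨a,b,c,d⟩ hx
    obtain ⟨-, h2, -, -, -⟩ := (mem_Wset G).mp hx
    simpa using h2
  rw [Finset.card_eq_sum_card_fiberwise hmap]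
  rw [Finset.sum_congr rfl (fun p hp => ?_), Finset.sum_const, smul_eq_mul, card_E2]
  obtain ⟨b, c⟩ := p
  have hbc : G.Adj b c := (mem_E2 G).mp hp
  have key : ((Wset G).filter fun x => ((x.2.1, x.2.2.1) : V×V) = (b,c)).card
      = (((G.neighborFinset b).erase c) ×ˢ ((G.neighborFinset c).erase b)).card := by
    apply Finset.card_nbij' (i := fun x => (x.1, x.2.2.2)) (j := fun q => (q.1, b, c, q.2))
    · rintro ⟨a,b',c',d⟩ hx
      simp only [Finset.mem_coe, Finset.mem_filter, mem_Wset, Prod.mk.injEq] at hx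
      obtain ⟨⟨h1, h2, h3, h4, h5⟩, rfl, rfl⟩ := hx
      simp only [Finset.mem_coe, Finset.mem_product, Finset.mem_erase, SimpleGraph.mem_neighborFinset]
      exact ⟨⟨h4, h1.symm⟩, ⟨fun t => h5 t.symm, h3⟩⟩
    · rintro ⟨a,d⟩ hq
      simp only [Finset.mem_coe, Finset.mem_product, Finset.mem_erase, SimpleGraph.mem_neighborFinset] at hq
      obtain ⟨⟨hac, ha⟩, ⟨hdb, hd⟩⟩ := hq
      simp only [Finset.mem_coe, Finset.mem_filter, mem_Wset, Prod.mk.injEq]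
      exact ⟨⟨ha.symm, hbc, hd, hac, fun t => hdb t.symm⟩, by simp⟩
    · rintro ⟨a,b',c',d⟩ hx
      simp only [Finset.mem_coe, Finset.mem_filter, mem_Wset, Prod.mk.injEq] at hx
      obtain ⟨-, rfl, rfl⟩ := hx
      rfl
    · rintro ⟨a,d⟩ _
      rfl
  rw [key, Finset.card_product, Finset.card_erase_of_mem (by simpa using hbc),
    Finset.card_erase_of_mem (by simpa using hbc.symm),
    SimpleGraph.card_neighborFinset_eq_degree, SimpleGraph.card_neighborFinset_eq_degree,
    hreg b, hreg c]

lemma card_E2_fst (a : V) : ((E2 G).filter fun q => q.1 = a).card = G.degree a := by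
  rw [← SimpleGraph.card_neighborFinset_eq_degree]
  apply Finset.card_nbij' (i := fun q => q.2) (j := fun v => (a,v))
  · rintro ⟨x,y⟩ hq
    simp only [Finset.mem_coe, Finset.mem_filter, mem_E2] at hq
    obtain ⟨h1, rfl⟩ := hq
    simpa using h1
  · intro v hv
    simp only [Finset.mem_coe, SimpleGraph.mem_neighborFinset] at hv
    simp [hv]
  · rintro ⟨x,y⟩ hq
    simp only [Finset.mem_coe, Finset.mem_filter, mem_E2] at hq
    simp [hq.2]
  · intro v _
    rfl

lemma card_E2_snd_ne (a b : V) :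
    ((E2 G).filter fun q => q.2 = a ∧ q.1 ≠ b).card = ((G.neighborFinset a).erase b).card := by
  apply Finset.card_nbij' (i := fun q => q.1) (j := fun v => (v,a))
  · rintro ⟨x,y⟩ hq
    simp only [Finset.mem_coe, Finset.mem_filter, mem_E2] at hq
    obtain ⟨h1, rfl, h3⟩ := hq
    simp only [Finset.mem_coe, Finset.mem_erase, SimpleGraph.mem_neighborFinset]
    exact ⟨h3, h1.symm⟩
  · intro v hv
    simp only [Finset.mem_coe, Finset.mem_erase, SimpleGraph.mem_neighborFinset] at hv
    simp only [Finset.mem_coe, Finset.mem_filter, mem_E2]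
    simp [hv.1, hv.2.symm]
  · rintro ⟨x,y⟩ hq
    simp only [Finset.mem_coe, Finset.mem_filter, mem_E2] at hq
    simp [hq.2.1]
  · intro v _
    rfl

lemma card_Dset {r : ℕ} (hreg : G.IsRegularOfDegree r) :
    (Dset G).card + 2 * G.edgeFinset.card * (r + r + ((r-1) + (r-1)))
      = 2 * G.edgeFinset.card * (2 * G.edgeFinset.card) := by
  have hmap : ∀ x ∈ Dset G, ((x.1, x.2.1) : V×V) ∈ E2 G := by
    rintro ⟨a,b,c,d⟩ hx
    obtain ⟨h1, -, -, -, -, -⟩ := (mem_Dset G).mp hx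
    simpa using h1
  have hfib : ∀ p ∈ E2 G, ((Dset G).filter fun x => ((x.1, x.2.1) : V×V) = p).card
      + (r + r + ((r-1) + (r-1))) = (E2 G).card := by
    rintro ⟨a, b⟩ hp
    have hab : G.Adj a b := (mem_E2 G).mp hp
    have key : ((Dset G).filter fun x => ((x.1, x.2.1) : V×V) = (a,b)).card
        = ((E2 G).filter fun q => q.1 ≠ a ∧ q.1 ≠ b ∧ q.2 ≠ a ∧ q.2 ≠ b).card := by
      apply Finset.card_nbij' (i := fun x => (x.2.2.1, x.2.2.2)) (j := fun q => (a, b, q.1, q.2))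
      · rintro ⟨a',b',c,d⟩ hx
        simp only [Finset.mem_coe, Finset.mem_filter, mem_Dset, Prod.mk.injEq] at hx
        obtain ⟨⟨h1, h2, h3, h4, h5, h6⟩, rfl, rfl⟩ := hx
        simp only [Finset.mem_coe, Finset.mem_filter, mem_E2]
        exact ⟨h2, fun t => h3 t.symm, fun t => h5 t.symm, fun t => h4 t.symm,
          fun t => h6 t.symm⟩
      · rintro ⟨c,d⟩ hq
        simp only [Finset.mem_coe, Finset.mem_filter, mem_E2] at hq
        obtain ⟨hcd, n1, n2, n3, n4⟩ := hq
        simp only [Finset.mem_coe, Finset.mem_filter, mem_Dset, Prod.mk.injEq]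
        exact ⟨⟨hab, hcd, fun t => n1 t.symm, fun t => n3 t.symm, fun t => n2 t.symm,
          fun t => n4 t.symm⟩, by simp⟩
      · rintro ⟨a',b',c,d⟩ hx
        simp only [Finset.mem_coe, Finset.mem_filter, mem_Dset, Prod.mk.injEq] at hx
        obtain ⟨-, rfl, rfl⟩ := hx
        rfl
      · rintro ⟨c,d⟩ _
        rfl
    rw [key]
    have base := Finset.card_filter_add_card_filter_not
      (s := E2 G) (p := fun q : V×V => q.1 ≠ a ∧ q.1 ≠ b ∧ q.2 ≠ a ∧ q.2 ≠ b)
    have hbad : ((E2 G).filter fun q : V×V => ¬(q.1 ≠ a ∧ q.1 ≠ b ∧ q.2 ≠ a ∧ q.2 ≠ b)).card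
        = r + r + ((r-1) + (r-1)) := by
      have e1 : ((E2 G).filter fun q : V×V => ¬(q.1 ≠ a ∧ q.1 ≠ b ∧ q.2 ≠ a ∧ q.2 ≠ b))
          = ((E2 G).filter fun q : V×V => q.1 = a ∨ q.1 = b)
            ∪ ((E2 G).filter fun q : V×V => (q.2 = a ∧ q.1 ≠ b) ∨ (q.2 = b ∧ q.1 ≠ a)) := by
        ext ⟨x,y⟩
        simp only [Finset.mem_filter, Finset.mem_union, mem_E2]
        constructor
        · rintro ⟨h1, h2⟩
          push_neg at h2
          by_cases hxa : x = a
          · exact Or.inl ⟨h1, Or.inl hxa⟩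
          · by_cases hxb : x = b
            · exact Or.inl ⟨h1, Or.inr hxb⟩
            · by_cases hya : y = a
              · exact Or.inr ⟨h1, Or.inl ⟨hya, hxb⟩⟩
              · exact Or.inr ⟨h1, Or.inr ⟨h2 hxa hxb hya, hxa⟩⟩
        · rintro (⟨h1, h2⟩ | ⟨h1, h2⟩) <;> refine ⟨by assumption, ?_⟩ <;> tauto
      have d1 : Disjoint ((E2 G).filter fun q : V×V => q.1 = a ∨ q.1 = b)
          ((E2 G).filter fun q : V×V => (q.2 = a ∧ q.1 ≠ b) ∨ (q.2 = b ∧ q.1 ≠ a)) := by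
        rw [Finset.disjoint_left]
        rintro ⟨x,y⟩ h1 h2
        simp only [Finset.mem_filter, mem_E2] at h1 h2
        obtain ⟨hadj, h1⟩ := h1
        obtain ⟨-, h2⟩ := h2
        rcases h1 with rfl | rfl <;> rcases h2 with ⟨rfl, h⟩ | ⟨rfl, h⟩ <;>
          first | exact h rfl | exact (G.irrefl hadj)
      have e2 : ((E2 G).filter fun q : V×V => q.1 = a ∨ q.1 = b)
          = ((E2 G).filter fun q : V×V => q.1 = a) ∪ ((E2 G).filter fun q : V×V => q.1 = b) :=
        Finset.filter_or _ _ _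
      have d2 : Disjoint ((E2 G).filter fun q : V×V => q.1 = a)
          ((E2 G).filter fun q : V×V => q.1 = b) := by
        rw [Finset.disjoint_left]
        rintro ⟨x,y⟩ h1 h2
        simp only [Finset.mem_filter, mem_E2] at h1 h2
        exact hab.ne (h1.2.symm.trans h2.2)
      have e3 : ((E2 G).filter fun q : V×V => (q.2 = a ∧ q.1 ≠ b) ∨ (q.2 = b ∧ q.1 ≠ a))
          = ((E2 G).filter fun q : V×V => q.2 = a ∧ q.1 ≠ b)
            ∪ ((E2 G).filter fun q : V×V => q.2 = b ∧ q.1 ≠ a) :=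
        Finset.filter_or _ _ _
      have d3 : Disjoint ((E2 G).filter fun q : V×V => q.2 = a ∧ q.1 ≠ b)
          ((E2 G).filter fun q : V×V => q.2 = b ∧ q.1 ≠ a) := by
        rw [Finset.disjoint_left]
        rintro ⟨x,y⟩ h1 h2
        simp only [Finset.mem_filter, mem_E2] at h1 h2
        exact hab.ne (h1.2.1.symm.trans h2.2.1)
      rw [e1, Finset.card_union_of_disjoint d1, e2, Finset.card_union_of_disjoint d2, e3,
        Finset.card_union_of_disjoint d3, card_E2_fst, card_E2_fst, card_E2_snd_ne,
        card_E2_snd_ne, hreg a, hreg b,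
        Finset.card_erase_of_mem (by simpa using hab),
        Finset.card_erase_of_mem (by simpa using hab.symm),
        SimpleGraph.card_neighborFinset_eq_degree, SimpleGraph.card_neighborFinset_eq_degree,
        hreg a, hreg b]
    omega
  have total := Finset.sum_congr rfl hfib
  rw [Finset.sum_add_distrib, ← Finset.card_eq_sum_card_fiberwise hmap, Finset.sum_const,
    Finset.sum_const, smul_eq_mul, smul_eq_mul, card_E2] at total
  exact total


lemma split_W (htf : G.CliqueFree 3) :
    (Cset G).card + (Bset G).card = (Wset G).card := by
  have h1 : (Wset G).filter (fun x => G.Adj x.1 x.2.2.2) = Cset G := by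
    ext ⟨a,b,c,d⟩
    simp only [Finset.mem_filter, mem_Wset, mem_Cset]
    constructor
    · rintro ⟨⟨hab, hbc, hcd, nac, nbd⟩, had⟩
      exact ⟨hab, hbc, hcd, had, noTri G htf hab hbc, noTri G htf hbc hcd, nac, nbd⟩
    · rintro ⟨hab, hbc, hcd, had, -, -, nac, nbd⟩
      exact ⟨⟨hab, hbc, hcd, nac, nbd⟩, had⟩
  have h2 : (Wset G).filter (fun x => ¬G.Adj x.1 x.2.2.2) = Bset G := by
    ext ⟨a,b,c,d⟩
    simp only [Finset.mem_filter, mem_Wset, mem_Bset]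
    constructor
    · rintro ⟨⟨hab, hbc, hcd, nac, nbd⟩, nad⟩
      exact ⟨hab, hbc, hcd, noTri G htf hab hbc, nad, noTri G htf hbc hcd⟩
    · rintro ⟨hab, hbc, hcd, nac, nad, nbd⟩
      have eac : a ≠ c := by rintro rfl; exact nad hcd
      have ebd : b ≠ d := by rintro rfl; exact nad hab
      exact ⟨⟨hab, hbc, hcd, eac, ebd⟩, nad⟩
  have := Finset.card_filter_add_card_filter_not
    (s := Wset G) (p := fun x : V×V×V×V => G.Adj x.1 x.2.2.2)
  rw [h1, h2] at this
  exact this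


lemma split_D (htf : G.CliqueFree 3) :
    (Dset G).card = (Aset G).card + 4 * (Bset G).card + 2 * (Cset G).card := by
  have s0 := Finset.card_filter_add_card_filter_not
    (s := Dset G) (p := fun x : V×V×V×V => G.Adj x.1 x.2.2.1)
  have s1 := Finset.card_filter_add_card_filter_not
    (s := (Dset G).filter (fun x : V×V×V×V => G.Adj x.1 x.2.2.1))
    (p := fun x : V×V×V×V => G.Adj x.2.1 x.2.2.2)
  have s2 := Finset.card_filter_add_card_filter_not
    (s := (Dset G).filter (fun x : V×V×V×V => ¬G.Adj x.1 x.2.2.1))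
    (p := fun x : V×V×V×V => G.Adj x.2.1 x.2.2.2)
  have s3 := Finset.card_filter_add_card_filter_not
    (s := ((Dset G).filter (fun x : V×V×V×V => ¬G.Adj x.1 x.2.2.1)).filter
      (fun x : V×V×V×V => ¬G.Adj x.2.1 x.2.2.2))
    (p := fun x : V×V×V×V => G.Adj x.1 x.2.2.2)
  have s4 := Finset.card_filter_add_card_filter_not
    (s := (((Dset G).filter (fun x : V×V×V×V => ¬G.Adj x.1 x.2.2.1)).filter
      (fun x : V×V×V×V => ¬G.Adj x.2.1 x.2.2.2)).filter
      (fun x : V×V×V×V => G.Adj x.1 x.2.2.2))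
    (p := fun x : V×V×V×V => G.Adj x.2.1 x.2.2.1)
  have s5 := Finset.card_filter_add_card_filter_not
    (s := (((Dset G).filter (fun x : V×V×V×V => ¬G.Adj x.1 x.2.2.1)).filter
      (fun x : V×V×V×V => ¬G.Adj x.2.1 x.2.2.2)).filter
      (fun x : V×V×V×V => ¬G.Adj x.1 x.2.2.2))
    (p := fun x : V×V×V×V => G.Adj x.2.1 x.2.2.1)
  have c1 : (((Dset G).filter (fun x : V×V×V×V => G.Adj x.1 x.2.2.1)).filter
      (fun x : V×V×V×V => G.Adj x.2.1 x.2.2.2)).card = (Cset G).card := by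
    apply Finset.card_nbij' (i := fun x => (x.2.1, x.1, x.2.2.1, x.2.2.2))
      (j := fun x => (x.2.1, x.1, x.2.2.1, x.2.2.2))
    · rintro ⟨a,b,c,d⟩ hx
      simp only [Finset.mem_coe, Finset.mem_filter, mem_Dset] at hx
      obtain ⟨⟨⟨hab, hcd, nac, nad, nbc, nbd⟩, hac⟩, hbd⟩ := hx
      exact (mem_Cset G).mpr ⟨hab.symm, hac, hcd, hbd, noTri G htf hab.symm hac,
        noTri G htf hac hcd, nbc, nad⟩
    · rintro ⟨p,q,r,s⟩ hy
      obtain ⟨hpq, hqr, hrs, hps, n1, n2, ne1, ne2⟩ := (mem_Cset G).mp hy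
      simp only [Finset.mem_coe, Finset.mem_filter, mem_Dset]
      exact ⟨⟨⟨hpq.symm, hrs, hqr.ne, ne2, ne1, hps.ne⟩, hqr⟩, hps⟩
    · rintro ⟨a,b,c,d⟩ _; rfl
    · rintro ⟨p,q,r,s⟩ _; rfl
  have c2 : (((Dset G).filter (fun x : V×V×V×V => G.Adj x.1 x.2.2.1)).filter
      (fun x : V×V×V×V => ¬G.Adj x.2.1 x.2.2.2)).card = (Bset G).card := by
    apply Finset.card_nbij' (i := fun x => (x.2.1, x.1, x.2.2.1, x.2.2.2))
      (j := fun x => (x.2.1, x.1, x.2.2.1, x.2.2.2))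
    · rintro ⟨a,b,c,d⟩ hx
      simp only [Finset.mem_coe, Finset.mem_filter, mem_Dset] at hx
      obtain ⟨⟨⟨hab, hcd, nac, nad, nbc, nbd⟩, hac⟩, nbd2⟩ := hx
      exact (mem_Bset G).mpr ⟨hab.symm, hac, hcd, noTri G htf hab.symm hac, nbd2,
        noTri G htf hac hcd⟩
    · rintro ⟨p,q,r,s⟩ hy
      obtain ⟨hpq, hqr, hrs, n1, n2, n3⟩ := (mem_Bset G).mp hy
      have ne1 : q ≠ s := by rintro rfl; exact n2 hpq
      have ne2 : p ≠ r := by rintro rfl; exact n2 hrs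
      have ne3 : p ≠ s := by rintro rfl; exact n1 hrs.symm
      simp only [Finset.mem_coe, Finset.mem_filter, mem_Dset]
      exact ⟨⟨⟨hpq.symm, hrs, hqr.ne, ne1, ne2, ne3⟩, hqr⟩, n2⟩
    · rintro ⟨a,b,c,d⟩ _; rfl
    · rintro ⟨p,q,r,s⟩ _; rfl
  have c3 : (((Dset G).filter (fun x : V×V×V×V => ¬G.Adj x.1 x.2.2.1)).filter
      (fun x : V×V×V×V => G.Adj x.2.1 x.2.2.2)).card = (Bset G).card := by
    apply Finset.card_nbij' (i := fun x => (x.1, x.2.1, x.2.2.2, x.2.2.1))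
      (j := fun x => (x.1, x.2.1, x.2.2.2, x.2.2.1))
    · rintro ⟨a,b,c,d⟩ hx
      simp only [Finset.mem_coe, Finset.mem_filter, mem_Dset] at hx
      obtain ⟨⟨⟨hab, hcd, nac, nad, nbc, nbd⟩, nac2⟩, hbd⟩ := hx
      exact (mem_Bset G).mpr ⟨hab, hbd, hcd.symm, noTri G htf hab hbd, nac2,
        noTri G htf hbd hcd.symm⟩
    · rintro ⟨p,q,r,s⟩ hy
      obtain ⟨hpq, hqr, hrs, n1, n2, n3⟩ := (mem_Bset G).mp hy
      have ne1 : q ≠ s := by rintro rfl; exact n2 hpq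
      have ne2 : p ≠ r := by rintro rfl; exact n2 hrs
      have ne3 : p ≠ s := by rintro rfl; exact n1 hrs.symm
      simp only [Finset.mem_coe, Finset.mem_filter, mem_Dset]
      exact ⟨⟨⟨hpq, hrs.symm, ne3, ne2, ne1, hqr.ne⟩, n2⟩, hqr⟩
    · rintro ⟨a,b,c,d⟩ _; rfl
    · rintro ⟨p,q,r,s⟩ _; rfl
  have c4 : ((((Dset G).filter (fun x : V×V×V×V => ¬G.Adj x.1 x.2.2.1)).filter
      (fun x : V×V×V×V => ¬G.Adj x.2.1 x.2.2.2)).filter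
      (fun x : V×V×V×V => G.Adj x.1 x.2.2.2)).filter
      (fun x : V×V×V×V => G.Adj x.2.1 x.2.2.1) = Cset G := by
    ext ⟨a,b,c,d⟩
    simp only [Finset.mem_filter, mem_Dset, mem_Cset]
    constructor
    · rintro ⟨⟨⟨⟨⟨hab, hcd, nac, nad, nbc, nbd⟩, n1⟩, n2⟩, had⟩, hbc⟩
      exact ⟨hab, hbc, hcd, had, n1, n2, nac, nbd⟩
    · rintro ⟨hab, hbc, hcd, had, n1, n2, ne1, ne2⟩
      exact ⟨⟨⟨⟨⟨hab, hcd, ne1, had.ne, hbc.ne, ne2⟩, n1⟩, n2⟩, had⟩, hbc⟩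
  have c5 : (((((Dset G).filter (fun x : V×V×V×V => ¬G.Adj x.1 x.2.2.1)).filter
      (fun x : V×V×V×V => ¬G.Adj x.2.1 x.2.2.2)).filter
      (fun x : V×V×V×V => G.Adj x.1 x.2.2.2)).filter
      (fun x : V×V×V×V => ¬G.Adj x.2.1 x.2.2.1)).card = (Bset G).card := by
    apply Finset.card_nbij' (i := fun x => (x.2.1, x.1, x.2.2.2, x.2.2.1))
      (j := fun x => (x.2.1, x.1, x.2.2.2, x.2.2.1))
    · rintro ⟨a,b,c,d⟩ hx
      simp only [Finset.mem_coe, Finset.mem_filter, mem_Dset] at hx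
      obtain ⟨⟨⟨⟨⟨hab, hcd, nac, nad, nbc, nbd⟩, n1⟩, n2⟩, had⟩, n4⟩ := hx
      exact (mem_Bset G).mpr ⟨hab.symm, had, hcd.symm, n2, n4, n1⟩
    · rintro ⟨p,q,r,s⟩ hy
      obtain ⟨hpq, hqr, hrs, n1, n2, n3⟩ := (mem_Bset G).mp hy
      have ne1 : q ≠ s := by rintro rfl; exact n2 hpq
      have ne2 : p ≠ r := by rintro rfl; exact n2 hrs
      have ne3 : p ≠ s := by rintro rfl; exact n1 hrs.symm
      simp only [Finset.mem_coe, Finset.mem_filter, mem_Dset]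
      exact ⟨⟨⟨⟨⟨hpq.symm, hrs.symm, ne1, hqr.ne, ne3, ne2⟩, n3⟩, n1⟩, hqr⟩, n2⟩
    · rintro ⟨a,b,c,d⟩ _; rfl
    · rintro ⟨p,q,r,s⟩ _; rfl
  have c6 : ((((Dset G).filter (fun x : V×V×V×V => ¬G.Adj x.1 x.2.2.1)).filter
      (fun x : V×V×V×V => ¬G.Adj x.2.1 x.2.2.2)).filter
      (fun x : V×V×V×V => ¬G.Adj x.1 x.2.2.2)).filter
      (fun x : V×V×V×V => G.Adj x.2.1 x.2.2.1) = Bset G := by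
    ext ⟨a,b,c,d⟩
    simp only [Finset.mem_filter, mem_Dset, mem_Bset]
    constructor
    · rintro ⟨⟨⟨⟨⟨hab, hcd, nac, nad, nbc, nbd⟩, n1⟩, n2⟩, n3⟩, hbc⟩
      exact ⟨hab, hbc, hcd, n1, n3, n2⟩
    · rintro ⟨hab, hbc, hcd, n1, n2, n3⟩
      have ne1 : a ≠ c := by rintro rfl; exact n2 hcd
      have ne2 : a ≠ d := by rintro rfl; exact n1 hcd.symm
      have ne3 : b ≠ d := by rintro rfl; exact n2 hab
      exact ⟨⟨⟨⟨⟨hab, hcd, ne1, ne2, hbc.ne, ne3⟩, n1⟩, n3⟩, n2⟩, hbc⟩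
  have c7 : ((((Dset G).filter (fun x : V×V×V×V => ¬G.Adj x.1 x.2.2.1)).filter
      (fun x : V×V×V×V => ¬G.Adj x.2.1 x.2.2.2)).filter
      (fun x : V×V×V×V => ¬G.Adj x.1 x.2.2.2)).filter
      (fun x : V×V×V×V => ¬G.Adj x.2.1 x.2.2.1) = Aset G := by
    ext ⟨a,b,c,d⟩
    simp only [Finset.mem_filter, mem_Dset, mem_Aset]
    constructor
    · rintro ⟨⟨⟨⟨⟨hab, hcd, nac, nad, nbc, nbd⟩, n1⟩, n2⟩, n3⟩, n4⟩
      exact ⟨hab, hcd, n1, n3, n4, n2⟩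
    · rintro ⟨hab, hcd, n1, n2, n3, n4⟩
      have ne1 : a ≠ c := by rintro rfl; exact n2 hcd
      have ne2 : a ≠ d := by rintro rfl; exact n1 hcd.symm
      have ne3 : b ≠ c := by rintro rfl; exact n4 hcd
      have ne4 : b ≠ d := by rintro rfl; exact n3 hcd.symm
      exact ⟨⟨⟨⟨⟨hab, hcd, ne1, ne2, ne3, ne4⟩, n1⟩, n4⟩, n2⟩, n3⟩
  rw [c4] at s4
  rw [c6, c7] at s5
  omega

end AuxStmt16

/-- Let `n, r ∈ ℕ` with `r ≥ 1`, let `G` be an `n`-vertex `r`-regular triangle-free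
finite simple graph, and let `m = nr/2` be its number of edges.  Then, as rational numbers,
`(k₂⊎k₂)(G) − c_4(G) ≤ m·((m − r²)/2 − (r−1)²/4)`. -/
theorem stmt_16 {V : Type*} [Fintype V] [DecidableEq V] (G : SimpleGraph V) [DecidableRel G.Adj]
    (n r m : ℕ) (hr : 1 ≤ r) (hn : Fintype.card V = n) (hreg : G.IsRegularOfDegree r)
    (htf : G.CliqueFree 3) (hm : G.edgeFinset.card = m) :
    (numInducedReg G 4 1 : ℚ) - (numInducedReg G 4 2 : ℚ) ≤
      (m : ℚ) * (((m : ℚ) - (r : ℚ) ^ 2) / 2 - ((r : ℚ) - 1) ^ 2 / 4) := by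
  have hA := Aset_card G
  have hC := Cset_card G
  have hsD := split_D G htf
  have hD := card_Dset G hreg
  have hsW := split_W G htf
  have hW := card_Wset G hreg
  rw [hm] at hD hW
  have N1 := hD
  rw [hsD, hA, hC] at N1
  have N2 : (Bset G).card + 8 * numInducedReg G 4 2 = 2 * m * ((r-1) * (r-1)) := by omega
  have Q1 := congrArg (Nat.cast : ℕ → ℚ) N1
  have Q2 := congrArg (Nat.cast : ℕ → ℚ) N2
  push_cast [Nat.cast_sub hr] at Q1 Q2
  have hb : (0:ℚ) ≤ ((Bset G).card : ℚ) := Nat.cast_nonneg _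
  nlinarith [Q1, Q2, hb]
end

section
/- Let G be a finite r-regular simple graph with girth 5 and diameter 2, and let m be its number of edges. Then every edge of G lies on exactly (r−1)² pentagon subsets (5-element vertex subsets J containing both endpoints of the edge with G[J] a 5-cycle), and consequently 5·c_5(G) = m·(r−1)². -/
open Finset

section Aux

open SimpleGraph

set_option linter.unusedSectionVars false

variable {V : Type*} [Fintype V] [DecidableEq V] {G : SimpleGraph V} [DecidableRel G.Adj]

lemma my_cycles_long (hg : G.girth = 5) {a : V} (w : G.Walk a a) (hw : w.IsCycle) :
    5 ≤ w.length := by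
  have hne : G.egirth ≠ ⊤ := by
    intro h
    rw [SimpleGraph.girth, h] at hg
    simp at hg
  have h5 : G.egirth = 5 := by
    rw [SimpleGraph.girth] at hg
    rw [← ENat.coe_toNat hne, hg]; rfl
  have := SimpleGraph.le_egirth.mp (le_of_eq h5.symm) a w hw
  exact_mod_cast this

lemma my_no_tri (hg : G.girth = 5) {a b c : V} (hab : G.Adj a b) (hbc : G.Adj b c)
    (hca : G.Adj c a) : False := by
  have hcyc : (SimpleGraph.Walk.cons hab (.cons hbc (.cons hca .nil)) : G.Walk a a).IsCycle := by
    rw [SimpleGraph.Walk.cons_isCycle_iff]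
    refine ⟨?_, ?_⟩
    · simp [SimpleGraph.Walk.isPath_def, hbc.ne, hca.ne, hab.ne', hca.ne']
    · simp [Sym2.eq_iff, hab.ne, hca.ne, hbc.ne, hab.ne', hca.ne', hbc.ne']
  have := my_cycles_long hg _ hcyc
  simp [SimpleGraph.Walk.length_cons] at this

lemma my_no_four (hg : G.girth = 5) {a b c d : V} (hab : G.Adj a b) (hbc : G.Adj b c)
    (hcd : G.Adj c d) (hda : G.Adj d a) (hac : a ≠ c) (hbd : b ≠ d) : False := by
  have hcyc : (SimpleGraph.Walk.cons hab (.cons hbc (.cons hcd (.cons hda .nil)))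
      : G.Walk a a).IsCycle := by
    rw [SimpleGraph.Walk.cons_isCycle_iff]
    refine ⟨?_, ?_⟩
    · simp [SimpleGraph.Walk.isPath_def, hbc.ne, hcd.ne, hda.ne, hda.ne', hbd, hac, hac.symm,
        hab.ne']
    · simp [Sym2.eq_iff, hab.ne, hda.ne, hda.ne', hab.ne', hac, hbd]
  have := my_cycles_long hg _ hcyc
  simp [SimpleGraph.Walk.length_cons] at this

lemma my_exists_cn (hd : G.diam = 2) {u v : V} (hne : u ≠ v) (hadj : ¬ G.Adj u v) :
    ∃ c, G.Adj u c ∧ G.Adj c v := by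
  have htop : G.ediam ≠ ⊤ := by
    intro h
    rw [SimpleGraph.diam, h] at hd
    simp at hd
  have h2 : G.ediam = 2 := by
    rw [SimpleGraph.diam] at hd
    rw [← ENat.coe_toNat htop, hd]; rfl
  have hle : G.edist u v ≤ 2 := h2 ▸ SimpleGraph.edist_le_ediam
  have hent : G.edist u v ≠ ⊤ := by
    intro h; rw [h] at hle; exact absurd hle (by simp)
  obtain ⟨p, hp⟩ := SimpleGraph.exists_walk_of_edist_ne_top hent
  have hlen : p.length ≤ 2 := by
    have := hp ▸ hle
    exact_mod_cast this
  cases p with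
  | nil => exact absurd rfl hne
  | cons h q =>
    cases q with
    | nil => exact absurd h hadj
    | cons h' q' =>
      cases q' with
      | nil => exact ⟨_, h, h'⟩
      | cons h'' q'' => simp [SimpleGraph.Walk.length_cons] at hlen

lemma my_handshake (J : Finset V) :
    ∑ v ∈ J, (J.filter fun u => G.Adj v u).card
      = 2 * (G.edgeFinset.filter fun e => ∀ v ∈ e, v ∈ J).card := by
  classical
  let H : SimpleGraph {x // x ∈ J} := G.comap (fun x => (x : V))
  letI : DecidableRel H.Adj := Classical.decRel _
  have hdeg : ∀ v : {x // x ∈ J}, H.degree v = (J.filter fun u => G.Adj ↑v u).card := by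
    intro v
    rw [← SimpleGraph.card_neighborFinset_eq_degree]
    refine Finset.card_bij (fun (u : {x // x ∈ J}) _ => (u : V)) ?_ ?_ ?_
    · intro u hu
      simp only [SimpleGraph.mem_neighborFinset] at hu
      simp only [Finset.mem_filter]
      exact ⟨u.2, hu⟩
    · intro u _ w _ h; exact Subtype.ext h
    · intro w hw
      simp only [Finset.mem_filter] at hw
      exact ⟨⟨w, hw.1⟩, by simp [SimpleGraph.mem_neighborFinset, H, hw.2], rfl⟩
  have hedge : H.edgeFinset.card = (G.edgeFinset.filter fun e => ∀ v ∈ e, v ∈ J).card := by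
    refine Finset.card_bij (fun (e : Sym2 {x // x ∈ J}) _ => Sym2.map Subtype.val e) ?_ ?_ ?_
    · intro e he
      rw [SimpleGraph.mem_edgeFinset] at he
      induction e with
      | _ x y =>
        simp only [Sym2.map_pair_eq, Finset.mem_filter, SimpleGraph.mem_edgeFinset]
        refine ⟨he, ?_⟩
        intro w hw
        rw [Sym2.mem_iff] at hw
        rcases hw with rfl | rfl
        · exact x.2
        · exact y.2
    · intro e _ f _ h
      exact Sym2.map.injective Subtype.val_injective h
    · intro e he
      simp only [Finset.mem_filter, SimpleGraph.mem_edgeFinset] at he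
      induction e with
      | _ x y =>
        refine ⟨s(⟨x, he.2 x (by simp)⟩, ⟨y, he.2 y (by simp)⟩), ?_, by simp⟩
        rw [SimpleGraph.mem_edgeFinset]
        exact he.1
  calc ∑ v ∈ J, (J.filter fun u => G.Adj v u).card
      = ∑ v : {x // x ∈ J}, (J.filter fun u => G.Adj ↑v u).card := by
        rw [Finset.sum_coe_sort J (fun v => (J.filter fun u => G.Adj v u).card)]
    _ = ∑ v : {x // x ∈ J}, H.degree v := Finset.sum_congr rfl fun v _ => (hdeg v).symm
    _ = 2 * H.edgeFinset.card := SimpleGraph.sum_degrees_eq_twice_card_edges H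
    _ = _ := by rw [hedge]

lemma my_pent_facts
    (htri : ∀ {a b c : V}, G.Adj a b → G.Adj b c → G.Adj c a → False)
    (hfour : ∀ {a b c d : V}, G.Adj a b → G.Adj b c → G.Adj c d → G.Adj d a → a ≠ c → b ≠ d → False)
    {a b x y z : V} (hab : G.Adj a b) (hax : G.Adj a x) (hby : G.Adj b y)
    (hxz : G.Adj x z) (hzy : G.Adj z y) (hxb : x ≠ b) (hya : y ≠ a) :
    (insert a (insert b (insert x (insert y ({z} : Finset V))))).card = 5 ∧
    (∀ v ∈ insert a (insert b (insert x (insert y ({z} : Finset V)))),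
      ((insert a (insert b (insert x (insert y ({z} : Finset V))))).filter
        fun u => G.Adj v u).card = 2) ∧
    (insert a (insert b (insert x (insert y ({z} : Finset V))))).filter
        (fun u => G.Adj a u) = {b, x} ∧
    (insert a (insert b (insert x (insert y ({z} : Finset V))))).filter
        (fun u => G.Adj b u) = {a, y} := by
  set J := insert a (insert b (insert x (insert y ({z} : Finset V)))) with hJ
  have hay : ¬ G.Adj a y := fun h => htri hab hby h.symm
  have hbx : ¬ G.Adj b x := fun h => htri hab h hax.symm
  have hxy : ¬ G.Adj x y := fun h => hfour hab hby h.symm hax.symm hya.symm hxb.symm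
  have haz : ¬ G.Adj a z := fun h => htri hax hxz h.symm
  have hbz : ¬ G.Adj b z := fun h => htri hby hzy.symm h.symm
  have nab : a ≠ b := hab.ne
  have nax : a ≠ x := hax.ne
  have nay : a ≠ y := hya.symm
  have naz : a ≠ z := fun h => hay (by rw [h]; exact hzy)
  have nbx : b ≠ x := hxb.symm
  have nby : b ≠ y := hby.ne
  have nbz : b ≠ z := fun h => hbx (by subst h; exact hxz.symm)
  have nxy : x ≠ y := fun h => hay (h ▸ hax)
  have nxz : x ≠ z := hxz.ne
  have nyz : y ≠ z := hzy.ne'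
  have hcard : J.card = 5 := by
    rw [hJ, card_insert_of_notMem (by simp [nab, nax, nay, naz]),
      card_insert_of_notMem (by simp [nbx, nby, nbz]),
      card_insert_of_notMem (by simp [nxy, nxz]),
      card_insert_of_notMem (by simp [nyz]), card_singleton]
  have fa : J.filter (fun u => G.Adj a u) = {b, x} := by
    ext u
    simp only [hJ, mem_filter, mem_insert, mem_singleton]
    constructor
    · rintro ⟨(rfl | rfl | rfl | rfl | rfl), h⟩
      · exact absurd h (G.irrefl)
      · exact Or.inl rfl
      · exact Or.inr rfl
      · exact absurd h hay
      · exact absurd h haz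
    · rintro (rfl | rfl)
      · exact ⟨Or.inr (Or.inl rfl), hab⟩
      · exact ⟨Or.inr (Or.inr (Or.inl rfl)), hax⟩
  have fb : J.filter (fun u => G.Adj b u) = {a, y} := by
    ext u
    simp only [hJ, mem_filter, mem_insert, mem_singleton]
    constructor
    · rintro ⟨(rfl | rfl | rfl | rfl | rfl), h⟩
      · exact Or.inl rfl
      · exact absurd h (G.irrefl)
      · exact absurd h hbx
      · exact Or.inr rfl
      · exact absurd h hbz
    · rintro (rfl | rfl)
      · exact ⟨Or.inl rfl, hab.symm⟩
      · exact ⟨Or.inr (Or.inr (Or.inr (Or.inl rfl))), hby⟩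
  have fx : J.filter (fun u => G.Adj x u) = {a, z} := by
    ext u
    simp only [hJ, mem_filter, mem_insert, mem_singleton]
    constructor
    · rintro ⟨(rfl | rfl | rfl | rfl | rfl), h⟩
      · exact Or.inl rfl
      · exact absurd h.symm hbx
      · exact absurd h (G.irrefl)
      · exact absurd h hxy
      · exact Or.inr rfl
    · rintro (rfl | rfl)
      · exact ⟨Or.inl rfl, hax.symm⟩
      · exact ⟨Or.inr (Or.inr (Or.inr (Or.inr rfl))), hxz⟩
  have fy : J.filter (fun u => G.Adj y u) = {b, z} := by
    ext u
    simp only [hJ, mem_filter, mem_insert, mem_singleton]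
    constructor
    · rintro ⟨(rfl | rfl | rfl | rfl | rfl), h⟩
      · exact absurd h.symm hay
      · exact Or.inl rfl
      · exact absurd h.symm hxy
      · exact absurd h (G.irrefl)
      · exact Or.inr rfl
    · rintro (rfl | rfl)
      · exact ⟨Or.inr (Or.inl rfl), hby.symm⟩
      · exact ⟨Or.inr (Or.inr (Or.inr (Or.inr rfl))), hzy.symm⟩
  have fz : J.filter (fun u => G.Adj z u) = {x, y} := by
    ext u
    simp only [hJ, mem_filter, mem_insert, mem_singleton]
    constructor
    · rintro ⟨(rfl | rfl | rfl | rfl | rfl), h⟩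
      · exact absurd h.symm haz
      · exact absurd h.symm hbz
      · exact Or.inl rfl
      · exact Or.inr rfl
      · exact absurd h (G.irrefl)
    · rintro (rfl | rfl)
      · exact ⟨Or.inr (Or.inr (Or.inl rfl)), hxz.symm⟩
      · exact ⟨Or.inr (Or.inr (Or.inr (Or.inl rfl))), hzy⟩
  refine ⟨hcard, ?_, fa, fb⟩
  intro v hv
  rw [hJ] at hv
  simp only [mem_insert, mem_singleton] at hv
  rcases hv with rfl | rfl | rfl | rfl | rfl
  · rw [fa]; exact card_pair nbx
  · rw [fb]; exact card_pair nay
  · rw [fx]; exact card_pair naz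
  · rw [fy]; exact card_pair nbz
  · rw [fz]; exact card_pair nxy

lemma my_pent_decomp
    (htri : ∀ {a b c : V}, G.Adj a b → G.Adj b c → G.Adj c a → False)
    {a b : V} (hab : G.Adj a b) {J : Finset V} (hJ5 : J.card = 5)
    (haJ : a ∈ J) (hbJ : b ∈ J)
    (hpent : ∀ v ∈ J, (J.filter fun u => G.Adj v u).card = 2) :
    ∃ x y z, G.Adj a x ∧ x ≠ b ∧ G.Adj b y ∧ y ≠ a ∧ G.Adj x z ∧ G.Adj z y ∧
      J = insert a (insert b (insert x (insert y ({z} : Finset V)))) := by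
  obtain ⟨x, hfa, hxb⟩ : ∃ x, J.filter (fun u => G.Adj a u) = {b, x} ∧ x ≠ b := by
    obtain ⟨u, v, huv, he⟩ := Finset.card_eq_two.mp (hpent a haJ)
    have hbm : b ∈ J.filter (fun u => G.Adj a u) := mem_filter.mpr ⟨hbJ, hab⟩
    rw [he, mem_insert, mem_singleton] at hbm
    rcases hbm with rfl | rfl
    · exact ⟨v, he, fun h => huv h.symm⟩
    · exact ⟨u, by rw [he, pair_comm], huv⟩
  have hxm : x ∈ J.filter (fun u => G.Adj a u) := by rw [hfa]; simp
  rw [mem_filter] at hxm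
  obtain ⟨hxJ, hax⟩ := hxm
  obtain ⟨y, hfb, hya⟩ : ∃ y, J.filter (fun u => G.Adj b u) = {a, y} ∧ y ≠ a := by
    obtain ⟨u, v, huv, he⟩ := Finset.card_eq_two.mp (hpent b hbJ)
    have ham : a ∈ J.filter (fun u => G.Adj b u) := mem_filter.mpr ⟨haJ, hab.symm⟩
    rw [he, mem_insert, mem_singleton] at ham
    rcases ham with rfl | rfl
    · exact ⟨v, he, fun h => huv h.symm⟩
    · exact ⟨u, by rw [he, pair_comm], huv⟩
  have hym : y ∈ J.filter (fun u => G.Adj b u) := by rw [hfb]; simp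
  rw [mem_filter] at hym
  obtain ⟨hyJ, hby⟩ := hym
  have nab : a ≠ b := hab.ne
  have nax : a ≠ x := hax.ne
  have nby : b ≠ y := hby.ne
  have nxy : x ≠ y := fun h => htri hab (h ▸ hby) hax.symm
  set K := insert a (insert b (insert x ({y} : Finset V))) with hK
  have hKJ : K ⊆ J := by
    intro w hw
    rw [hK] at hw
    simp only [mem_insert, mem_singleton] at hw
    rcases hw with rfl | rfl | rfl | rfl <;> assumption
  have hKcard : K.card = 4 := by
    rw [hK, card_insert_of_notMem (by simp [nab, nax, hya.symm]),
      card_insert_of_notMem (by simp [hxb.symm, nby]),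
      card_insert_of_notMem (by simp [nxy]), card_singleton]
  obtain ⟨z, hz⟩ := Finset.card_eq_one.mp (by rw [card_sdiff_of_subset hKJ, hJ5, hKcard] : (J \ K).card = 1)
  have hzm : z ∈ J \ K := by rw [hz]; simp
  rw [mem_sdiff] at hzm
  obtain ⟨hzJ, hzK⟩ := hzm
  rw [hK] at hzK
  simp only [mem_insert, mem_singleton, not_or] at hzK
  obtain ⟨nza, nzb, nzx, nzy⟩ := hzK
  have hJeq : J = insert a (insert b (insert x (insert y ({z} : Finset V)))) := by
    refine (Finset.eq_of_subset_of_card_le ?_ ?_).symm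
    · intro w hw
      simp only [mem_insert, mem_singleton] at hw
      rcases hw with rfl | rfl | rfl | rfl | rfl <;> assumption
    · rw [hJ5, card_insert_of_notMem (by simp [nab, nax, hya.symm, Ne.symm nza]),
        card_insert_of_notMem (by simp [hxb.symm, nby, Ne.symm nzb]),
        card_insert_of_notMem (by simp [nxy, Ne.symm nzx]),
        card_insert_of_notMem (by simp [Ne.symm nzy]), card_singleton]
  have hza : ¬ G.Adj z a := by
    intro h
    have : z ∈ J.filter (fun u => G.Adj a u) := mem_filter.mpr ⟨hzJ, h.symm⟩
    rw [hfa, mem_insert, mem_singleton] at this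
    rcases this with rfl | rfl
    · exact nzb rfl
    · exact nzx rfl
  have hzb : ¬ G.Adj z b := by
    intro h
    have : z ∈ J.filter (fun u => G.Adj b u) := mem_filter.mpr ⟨hzJ, h.symm⟩
    rw [hfb, mem_insert, mem_singleton] at this
    rcases this with rfl | rfl
    · exact nza rfl
    · exact nzy rfl
  have hsub : J.filter (fun u => G.Adj z u) ⊆ {x, y} := by
    intro w hw
    rw [mem_filter] at hw
    obtain ⟨hwJ, hzw⟩ := hw
    rw [hJeq] at hwJ
    simp only [mem_insert, mem_singleton] at hwJ
    rcases hwJ with rfl | rfl | rfl | rfl | rfl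
    · exact absurd hzw hza
    · exact absurd hzw hzb
    · simp
    · simp
    · exact absurd hzw (G.irrefl)
  have hfz : J.filter (fun u => G.Adj z u) = {x, y} := by
    apply Finset.eq_of_subset_of_card_le hsub
    rw [hpent z hzJ, card_pair nxy]
  have hzx : G.Adj z x := by
    have : x ∈ J.filter (fun u => G.Adj z u) := by rw [hfz]; simp
    exact (mem_filter.mp this).2
  have hzy : G.Adj z y := by
    have : y ∈ J.filter (fun u => G.Adj z u) := by rw [hfz]; simp
    exact (mem_filter.mp this).2
  exact ⟨x, y, z, hax, hxb, hby, hya, hzx.symm, hzy, hJeq⟩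

open scoped Classical in
noncomputable def myCN {W : Type*} (G : SimpleGraph W) (x y : W) : W :=
  if h : ∃ c, G.Adj x c ∧ G.Adj c y then h.choose else x

lemma myCN_spec {W : Type*} {G : SimpleGraph W} {x y : W} (h : ∃ c, G.Adj x c ∧ G.Adj c y) :
    G.Adj x (myCN G x y) ∧ G.Adj (myCN G x y) y := by
  classical
  rw [myCN]
  rw [dif_pos h]
  exact h.choose_spec

lemma my_edge_count {r : ℕ}
    (htri : ∀ {a b c : V}, G.Adj a b → G.Adj b c → G.Adj c a → False)
    (hfour : ∀ {a b c d : V}, G.Adj a b → G.Adj b c → G.Adj c d → G.Adj d a → a ≠ c → b ≠ d → False)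
    (hcn : ∀ {u v : V}, u ≠ v → ¬ G.Adj u v → ∃ c, G.Adj u c ∧ G.Adj c v)
    (hreg : G.IsRegularOfDegree r) {a b : V} (hab : G.Adj a b) :
    (((univ : Finset V).powersetCard 5).filter fun J =>
      (a ∈ J ∧ b ∈ J) ∧ ∀ v ∈ J, (J.filter fun u => G.Adj v u).card = 2).card = (r - 1) ^ 2 := by
  have hcnu : ∀ {x y c d : V}, x ≠ y → G.Adj x c → G.Adj c y → G.Adj x d → G.Adj d y → c = d := by
    intro x y c d hxy h1 h2 h3 h4
    by_contra hne
    exact hfour h1 h2 h4.symm h3.symm hxy hne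
  have pairfacts : ∀ {x y : V}, G.Adj a x → x ≠ b → G.Adj b y → y ≠ a →
      x ≠ y ∧ ¬ G.Adj x y := by
    intro x y hax hxb hby hya
    have hxy : x ≠ y := fun h => htri hab (h ▸ hby) hax.symm
    exact ⟨hxy, fun h => hfour hab hby h.symm hax.symm hya.symm hxb.symm⟩
  have key : (((G.neighborFinset a).erase b) ×ˢ ((G.neighborFinset b).erase a)).card
      = (((univ : Finset V).powersetCard 5).filter fun J =>
      (a ∈ J ∧ b ∈ J) ∧ ∀ v ∈ J, (J.filter fun u => G.Adj v u).card = 2).card := by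
    refine Finset.card_bij (fun p _ =>
      insert a (insert b (insert p.1 (insert p.2 ({myCN G p.1 p.2} : Finset V)))) ) ?_ ?_ ?_
    · rintro ⟨x, y⟩ hp
      simp only [mem_product, mem_erase, mem_neighborFinset] at hp
      obtain ⟨⟨hxb, hax⟩, hya, hby⟩ := hp
      obtain ⟨hxy, hnadj⟩ := pairfacts hax hxb hby hya
      obtain ⟨hxz, hzy⟩ := myCN_spec (hcn hxy hnadj)
      obtain ⟨hcard, hpent, -, -⟩ := my_pent_facts htri hfour hab hax hby hxz hzy hxb hya
      simp only [mem_filter, Finset.mem_powersetCard_univ]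
      exact ⟨hcard, ⟨by simp, by simp⟩, hpent⟩
    · rintro ⟨x, y⟩ hp ⟨x', y'⟩ hp' heq
      simp only [mem_product, mem_erase, mem_neighborFinset] at hp hp'
      obtain ⟨⟨hxb, hax⟩, hya, hby⟩ := hp
      obtain ⟨⟨hxb', hax'⟩, hya', hby'⟩ := hp'
      obtain ⟨hxy, hnadj⟩ := pairfacts hax hxb hby hya
      obtain ⟨hxy', hnadj'⟩ := pairfacts hax' hxb' hby' hya'
      obtain ⟨hxz, hzy⟩ := myCN_spec (hcn hxy hnadj)
      obtain ⟨hxz', hzy'⟩ := myCN_spec (hcn hxy' hnadj')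
      obtain ⟨-, -, fa, fb⟩ := my_pent_facts htri hfour hab hax hby hxz hzy hxb hya
      obtain ⟨-, -, fa', fb'⟩ := my_pent_facts htri hfour hab hax' hby' hxz' hzy' hxb' hya'
      dsimp only at heq
      rw [heq] at fa fb
      rw [fa'] at fa
      rw [fb'] at fb
      have hx : x = x' := by
        have : x ∈ ({b, x'} : Finset V) := by rw [fa]; simp
        rw [mem_insert, mem_singleton] at this
        rcases this with rfl | rfl
        · exact absurd rfl hxb
        · rfl
      have hy : y = y' := by
        have : y ∈ ({a, y'} : Finset V) := by rw [fb]; simp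
        rw [mem_insert, mem_singleton] at this
        rcases this with rfl | rfl
        · exact absurd rfl hya
        · rfl
      simp [hx, hy]
    · intro J hJ
      simp only [mem_filter, Finset.mem_powersetCard_univ] at hJ
      obtain ⟨hJ5, ⟨haJ, hbJ⟩, hpent⟩ := hJ
      obtain ⟨x, y, z, hax, hxb, hby, hya, hxz, hzy, hJeq⟩ :=
        my_pent_decomp htri hab hJ5 haJ hbJ hpent
      obtain ⟨hxy, hnadj⟩ := pairfacts hax hxb hby hya
      refine ⟨(x, y), ?_, ?_⟩
      · simp only [mem_product, mem_erase, mem_neighborFinset]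
        exact ⟨⟨hxb, hax⟩, hya, hby⟩
      · have hz : myCN G x y = z := by
          obtain ⟨h1, h2⟩ := myCN_spec (⟨z, hxz, hzy⟩ : ∃ c, G.Adj x c ∧ G.Adj c y)
          exact hcnu hxy h1 h2 hxz hzy
        dsimp only
        rw [hz]
        exact hJeq.symm
  rw [← key, card_product, card_erase_of_mem (by rw [mem_neighborFinset]; exact hab),
    card_erase_of_mem (by rw [mem_neighborFinset]; exact hab.symm),
    G.card_neighborFinset_eq_degree, G.card_neighborFinset_eq_degree, hreg a, hreg b, sq]

end Aux

/-- Let `G` be a finite `r`-regular simple graph with girth 5 and diameter 2, and let `m`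
be its number of edges.  Then every edge of `G` lies on exactly `(r−1)²` pentagon subsets
(5-element vertex subsets `J` containing both endpoints of the edge such that `G[J]` is a
5-cycle, i.e. `G[J]` is 2-regular), and consequently `5·c_5(G) = m·(r−1)²`. -/
theorem stmt_17 {V : Type*} [Fintype V] [DecidableEq V] (G : SimpleGraph V) [DecidableRel G.Adj]
    (r m : ℕ) (hreg : G.IsRegularOfDegree r) (hgirth : G.girth = 5) (hdiam : G.diam = 2)
    (hm : G.edgeFinset.card = m) :
    (∀ e ∈ G.edgeFinset,
        ((((univ : Finset V).powersetCard 5).filter fun J =>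
          (∀ v ∈ e, v ∈ J) ∧ ∀ v ∈ J, (J.filter fun u => G.Adj v u).card = 2).card)
          = (r - 1) ^ 2) ∧
      5 * numInducedReg G 5 2 = m * (r - 1) ^ 2 := by
  have htri : ∀ {a b c : V}, G.Adj a b → G.Adj b c → G.Adj c a → False :=
    fun h1 h2 h3 => my_no_tri hgirth h1 h2 h3
  have hfour : ∀ {a b c d : V}, G.Adj a b → G.Adj b c → G.Adj c d → G.Adj d a →
      a ≠ c → b ≠ d → False :=
    fun h1 h2 h3 h4 h5 h6 => my_no_four hgirth h1 h2 h3 h4 h5 h6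
  have hcn : ∀ {u v : V}, u ≠ v → ¬ G.Adj u v → ∃ c, G.Adj u c ∧ G.Adj c v :=
    fun h1 h2 => my_exists_cn hdiam h1 h2
  have part1 : ∀ e ∈ G.edgeFinset,
      ((((univ : Finset V).powersetCard 5).filter fun J =>
        (∀ v ∈ e, v ∈ J) ∧ ∀ v ∈ J, (J.filter fun u => G.Adj v u).card = 2).card)
        = (r - 1) ^ 2 := by
    intro e he
    rw [SimpleGraph.mem_edgeFinset] at he
    induction e with
    | _ a b =>
      have hab : G.Adj a b := he
      rw [← my_edge_count htri hfour hcn hreg hab]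
      congr 1
      apply Finset.filter_congr
      intro J _
      simp [Sym2.mem_iff, forall_eq_or_imp, forall_eq]
  refine ⟨part1, ?_⟩
  -- double counting
  set P5 := ((univ : Finset V).powersetCard 5) with hP5
  set Pent := P5.filter (fun J => ∀ v ∈ J, (J.filter fun u => G.Adj v u).card = 2) with hPent
  have hswap : ∀ e : Sym2 V,
      (P5.filter fun J => (∀ v ∈ e, v ∈ J) ∧ ∀ v ∈ J, (J.filter fun u => G.Adj v u).card = 2)
        = Pent.filter (fun J => ∀ v ∈ e, v ∈ J) := by
    intro e
    rw [hPent, Finset.filter_filter]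
    apply Finset.filter_congr
    intro J _
    exact and_comm
  have hfive : ∀ J ∈ Pent, (G.edgeFinset.filter fun e => ∀ v ∈ e, v ∈ J).card = 5 := by
    intro J hJ
    rw [hPent, mem_filter, hP5, Finset.mem_powersetCard_univ] at hJ
    obtain ⟨hJ5, hBJ⟩ := hJ
    have h1 : ∑ v ∈ J, (J.filter fun u => G.Adj v u).card = 10 := by
      rw [Finset.sum_congr rfl hBJ, Finset.sum_const, hJ5, smul_eq_mul]
    have h2 := my_handshake (G := G) J
    omega
  have hsum : ∑ e ∈ G.edgeFinset,
      (P5.filter fun J =>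
        (∀ v ∈ e, v ∈ J) ∧ ∀ v ∈ J, (J.filter fun u => G.Adj v u).card = 2).card
      = m * (r - 1) ^ 2 := by
    rw [Finset.sum_congr rfl (fun e he => part1 e he), Finset.sum_const, hm, smul_eq_mul]
  have hsum2 : ∑ e ∈ G.edgeFinset,
      (P5.filter fun J =>
        (∀ v ∈ e, v ∈ J) ∧ ∀ v ∈ J, (J.filter fun u => G.Adj v u).card = 2).card
      = 5 * Pent.card := by
    calc ∑ e ∈ G.edgeFinset,
        (P5.filter fun J =>
          (∀ v ∈ e, v ∈ J) ∧ ∀ v ∈ J, (J.filter fun u => G.Adj v u).card = 2).card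
        = ∑ e ∈ G.edgeFinset, (Pent.filter (fun J => ∀ v ∈ e, v ∈ J)).card :=
          Finset.sum_congr rfl fun e _ => by rw [hswap e]
      _ = ∑ e ∈ G.edgeFinset, ∑ J ∈ Pent, (if ∀ v ∈ e, v ∈ J then 1 else 0) :=
          Finset.sum_congr rfl fun e _ => Finset.card_filter _ _
      _ = ∑ J ∈ Pent, ∑ e ∈ G.edgeFinset, (if ∀ v ∈ e, v ∈ J then 1 else 0) :=
          Finset.sum_comm
      _ = ∑ J ∈ Pent, (G.edgeFinset.filter fun e => ∀ v ∈ e, v ∈ J).card :=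
          Finset.sum_congr rfl fun J _ => (Finset.card_filter _ _).symm
      _ = ∑ J ∈ Pent, 5 := Finset.sum_congr rfl hfive
      _ = 5 * Pent.card := by rw [Finset.sum_const, smul_eq_mul, Nat.mul_comm]
  have hcount : numInducedReg G 5 2 = Pent.card := rfl
  rw [hcount, ← hsum2, hsum]
end

section
/- Let G be a finite r-regular simple graph with girth 5 and diameter 2, with n vertices and m edges. Then i_4(G) = C(n,4) − C(n−2,2)·m + n(n−4)·C(r,2) − n·C(r,3) + C(m,2) − m·(r−1)², the identity being understood in the integers. -/
open Finset

namespace Stmt18Aux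
open SimpleGraph
set_option linter.unusedSectionVars false
variable {V : Type*} [Fintype V] [DecidableEq V] {G : SimpleGraph V} [DecidableRel G.Adj]

lemma girth_le_of_cycle {a : V} (w : G.Walk a a) (hw : w.IsCycle) : G.girth ≤ w.length := by
  have h : G.egirth ≤ (w.length : ℕ∞) :=
    le_trans (le_trans (iInf_le _ a) (iInf_le _ w)) (iInf_le _ hw)
  simpa [SimpleGraph.girth] using ENat.toNat_le_toNat h (by simp)

lemma no_tri (h5 : G.girth = 5) {a b c : V} (hab : G.Adj a b) (hbc : G.Adj b c)
    (hac : G.Adj a c) : False := by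
  have h1 := hab.ne
  have h2 := hbc.ne
  have h3 := hac.ne
  have hc : (Walk.cons hab (Walk.cons hbc (Walk.cons hac.symm Walk.nil))).IsCycle := by
    simp_all [Walk.isCycle_def, Walk.isTrail_def, List.nodup_cons, Sym2.eq_iff]
    aesop
  have := girth_le_of_cycle _ hc
  rw [h5] at this
  simp at this

lemma no_c4 (h5 : G.girth = 5) {a b c d : V} (hab : G.Adj a b) (hbc : G.Adj b c)
    (hcd : G.Adj c d) (hda : G.Adj d a) (hac : a ≠ c) (hbd : b ≠ d) : False := by
  have h1 := hab.ne
  have h2 := hbc.ne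
  have h3 := hcd.ne
  have h4 := hda.ne
  have hc : (Walk.cons hab (Walk.cons hbc (Walk.cons hcd (Walk.cons hda Walk.nil)))).IsCycle := by
    simp_all [Walk.isCycle_def, Walk.isTrail_def, List.nodup_cons, Sym2.eq_iff]
    aesop
  have := girth_le_of_cycle _ hc
  rw [h5] at this
  simp at this

lemma exists_common (hd : G.diam = 2) {u v : V} (hne : u ≠ v) (hnadj : ¬ G.Adj u v) :
    ∃ w, G.Adj u w ∧ G.Adj v w := by
  have hnt : G.ediam ≠ ⊤ := ediam_ne_top_of_diam_ne_zero (by rw [hd]; omega)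
  have hed : G.ediam = 2 := by
    have h2 : G.ediam.toNat = 2 := hd
    exact (ENat.toNat_eq_iff (by norm_num)).mp h2
  have hle : G.edist u v ≤ 2 := hed ▸ edist_le_ediam
  have h0 : G.edist u v ≠ 0 := fun h => hne (edist_eq_zero_iff.mp h)
  have h1 : G.edist u v ≠ 1 := fun h => hnadj (edist_eq_one_iff_adj.mp h)
  have hnt2 : G.edist u v ≠ ⊤ := by
    intro h; rw [h] at hle; exact absurd hle (by simp)
  have he2 : G.edist u v = 2 := by
    lift G.edist u v to ℕ using hnt2 with k hk
    norm_cast at *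
    omega
  obtain ⟨p, hp⟩ := exists_walk_of_edist_eq_coe (k := 2) he2
  cases p with
  | nil => simp at hp
  | cons h q =>
    cases q with
    | nil => simp at hp
    | cons h' q' =>
      cases q' with
      | nil => exact ⟨_, h, h'.symm⟩
      | cons h'' q'' => simp [Walk.length_cons] at hp

/-- exactly one common neighbour for non-adjacent distinct vertices -/
lemma common_card (h5 : G.girth = 5) (hd : G.diam = 2) {u v : V} (hne : u ≠ v)
    (hnadj : ¬ G.Adj u v) :
    (G.neighborFinset u ∩ G.neighborFinset v).card = 1 := by
  obtain ⟨w, hw1, hw2⟩ := exists_common hd hne hnadj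
  rw [card_eq_one]
  refine ⟨w, ?_⟩
  ext x
  simp only [mem_inter, mem_neighborFinset, mem_singleton]
  constructor
  · rintro ⟨hx1, hx2⟩
    by_contra hxw
    exact no_c4 h5 hx1 hx2.symm hw2 hw1.symm hne hxw
  · rintro rfl
    exact ⟨hw1, hw2⟩

lemma adj_inter_empty (h5 : G.girth = 5) {u v : V} (h : G.Adj u v) :
    G.neighborFinset u ∩ G.neighborFinset v = ∅ := by
  ext x
  simp only [mem_inter, mem_neighborFinset, notMem_empty, iff_false, not_and]
  intro h1 h2
  exact no_tri h5 h h2 h1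

lemma card_V {r : ℕ} (h5 : G.girth = 5) (hd : G.diam = 2) (hreg : G.IsRegularOfDegree r) :
    Fintype.card V = r * r + 1 := by
  have : Nontrivial V := nontrivial_of_diam_ne_zero (by rw [hd]; omega)
  obtain ⟨v₀⟩ : Nonempty V := inferInstance
  set A : V → Finset V := fun v => G.neighborFinset v with hA
  have hcardA : ∀ v, (A v).card = r := fun v => hreg v ▸ G.card_neighborFinset_eq_degree v
  set D : Finset V := univ \ insert v₀ (A v₀) with hD
  have hsub : insert v₀ (A v₀) ⊆ univ := subset_univ _
  have hv₀ : v₀ ∉ A v₀ := by simp [hA]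
  have h1 : D.card + (r + 1) = Fintype.card V := by
    have := card_sdiff_add_card_eq_card hsub
    rw [← hD, card_insert_of_notMem hv₀, hcardA, card_univ] at this
    omega
  have h2 : D.card = ((A v₀).sigma fun u => (A u).erase v₀).card := by
    refine (Finset.card_bij (fun a _ => a.2) ?_ ?_ ?_).symm
    · rintro ⟨u, x⟩ ha
      rw [mem_sigma] at ha
      obtain ⟨hu, hx⟩ := ha
      rw [mem_erase] at hx
      simp only [hD, mem_sdiff, mem_univ, true_and, mem_insert, not_or]
      rw [hA, mem_neighborFinset] at hu
      rw [hA, mem_neighborFinset] at hx ⊢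
      refine ⟨hx.1, fun hvx => ?_⟩
      exact no_tri h5 hu hx.2 hvx
    · rintro ⟨u, x⟩ ha ⟨u', x'⟩ ha' hxx
      simp only at hxx
      rw [mem_sigma, mem_erase] at ha ha'
      obtain ⟨hu, hxne, hx⟩ := ha
      obtain ⟨hu', hx'ne, hx'⟩ := ha'
      subst hxx
      rw [hA, mem_neighborFinset] at hu hu' hx hx'
      have huu : u = u' := by
        by_contra hne
        exact no_c4 h5 hu hx (hx'.symm) hu'.symm (Ne.symm hxne) hne
      subst huu
      rfl
    · intro d hd'
      simp only [hD, mem_sdiff, mem_univ, true_and, mem_insert, not_or] at hd'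
      obtain ⟨hdv, hdA⟩ := hd'
      rw [hA, mem_neighborFinset] at hdA
      obtain ⟨w, hw1, hw2⟩ := exists_common hd (Ne.symm hdv) hdA
      refine ⟨⟨w, d⟩, ?_, rfl⟩
      simp only [mem_sigma, mem_erase, hA, mem_neighborFinset]
      exact ⟨hw1, hdv, hw2.symm⟩
  have h3 : D.card + r = r * r := by
    rw [h2, card_sigma]
    have hstep : ∀ u ∈ A v₀, ((A u).erase v₀).card + 1 = r := by
      intro u hu
      rw [hA, mem_neighborFinset] at hu
      have : v₀ ∈ A u := by rw [hA, mem_neighborFinset]; exact hu.symm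
      rw [card_erase_add_one this, hcardA]
    calc (∑ u ∈ A v₀, ((A u).erase v₀).card) + r
        = ∑ u ∈ A v₀, (((A u).erase v₀).card + 1) := by
          rw [sum_add_distrib, sum_const, smul_eq_mul, mul_one, hcardA]
      _ = ∑ u ∈ A v₀, r := Finset.sum_congr rfl hstep
      _ = r * r := by rw [sum_const, smul_eq_mul, hcardA]
  omega

lemma r_ge_two {r : ℕ} (h5 : G.girth = 5) (hd : G.diam = 2) (hreg : G.IsRegularOfDegree r) :
    2 ≤ r := by
  have hnac : ¬ G.IsAcyclic := by
    intro h
    rw [h.girth_eq_zero] at h5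
    omega
  obtain ⟨a, w, hw, hlen⟩ := exists_girth_eq_length.mpr hnac
  have hlen5 : w.length = 5 := by omega
  have hub : 5 ≤ Fintype.card V := by
    have hnd : w.support.tail.Nodup := hw.2
    have : w.support.tail.length = 5 := by
      have := w.length_support
      simp only [List.length_tail, this, hlen5]
    calc 5 = w.support.tail.length := this.symm
      _ ≤ Fintype.card V := hnd.length_le_card
  have := card_V h5 hd hreg
  by_contra hr
  interval_cases r <;> omega

lemma handshake {r m : ℕ} (hreg : G.IsRegularOfDegree r) (hm : G.edgeFinset.card = m) :
    Fintype.card V * r = 2 * m := by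
  have := G.sum_degrees_eq_twice_card_edges
  rw [hm] at this
  rw [← this]
  rw [Finset.sum_congr rfl (fun v _ => hreg v), sum_const, smul_eq_mul, card_univ]

def indepSets (G : SimpleGraph V) [DecidableRel G.Adj] (t : ℕ) : Finset (Finset V) :=
  ((univ : Finset V).powersetCard t).filter fun s => ∀ u ∈ s, ∀ v ∈ s, ¬ G.Adj u v

lemma mem_indepSets {t : ℕ} {s : Finset V} :
    s ∈ indepSets G t ↔ s.card = t ∧ ∀ u ∈ s, ∀ v ∈ s, ¬ G.Adj u v := by
  simp [indepSets, mem_powersetCard_univ]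

def extFin (G : SimpleGraph V) [DecidableRel G.Adj] (s : Finset V) : Finset V :=
  univ.filter fun v => v ∉ s ∧ ∀ u ∈ s, ¬ G.Adj u v

lemma count_step (t : ℕ) :
    (t + 1) * (indepSets G (t + 1)).card = ∑ s ∈ indepSets G t, (extFin G s).card := by
  have hL : ∑ T ∈ indepSets G (t + 1), T.card = (t + 1) * (indepSets G (t + 1)).card := by
    rw [Finset.sum_congr rfl (fun T hT => (mem_indepSets.mp hT).1), sum_const, smul_eq_mul,
      mul_comm]
  rw [← hL, ← card_sigma, ← card_sigma]
  refine Finset.card_bij' (fun a _ => ⟨a.1.erase a.2, a.2⟩)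
    (fun b _ => ⟨insert b.2 b.1, b.2⟩) ?_ ?_ ?_ ?_
  · rintro ⟨T, v⟩ ha
    rw [mem_sigma] at ha
    obtain ⟨hT, hv⟩ := ha
    rw [mem_indepSets] at hT
    rw [mem_sigma, mem_indepSets]
    refine ⟨⟨?_, ?_⟩, ?_⟩
    · rw [card_erase_of_mem hv, hT.1]
      omega
    · intro u hu v' hv'
      exact hT.2 u (mem_of_mem_erase hu) v' (mem_of_mem_erase hv')
    · simp only [extFin, mem_filter, mem_univ, true_and]
      exact ⟨notMem_erase _ _, fun u hu => hT.2 u (mem_of_mem_erase hu) v hv⟩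
  · rintro ⟨s, v⟩ hb
    rw [mem_sigma] at hb
    obtain ⟨hs, hv⟩ := hb
    rw [mem_indepSets] at hs
    simp only [extFin, mem_filter, mem_univ, true_and] at hv
    rw [mem_sigma, mem_indepSets]
    refine ⟨⟨?_, ?_⟩, mem_insert_self _ _⟩
    · rw [card_insert_of_notMem hv.1, hs.1]
    · intro u hu w hw
      rcases mem_insert.mp hu with rfl | hu'
      · rcases mem_insert.mp hw with rfl | hw'
        · simp
        · intro hadj
          exact hv.2 w hw' hadj.symm
      · rcases mem_insert.mp hw with rfl | hw'
        · exact hv.2 u hu'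
        · exact hs.2 u hu' w hw'
  · rintro ⟨T, v⟩ ha
    rw [mem_sigma] at ha
    simp only
    congr 1
    exact insert_erase ha.2
  · rintro ⟨s, v⟩ hb
    rw [mem_sigma] at hb
    simp only [extFin, mem_filter] at hb
    simp only
    congr 1
    exact erase_insert hb.2.2.1

lemma extFin_card {s : Finset V} (hind : ∀ u ∈ s, ∀ v ∈ s, ¬ G.Adj u v) :
    (extFin G s).card + (s.card + (s.biUnion (fun x => G.neighborFinset x)).card) = Fintype.card V := by
  have hcompl : extFin G s = (s ∪ s.biUnion (fun x => G.neighborFinset x))ᶜ := by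
    ext v
    simp only [extFin, mem_filter, mem_univ, true_and, mem_compl, mem_union, mem_biUnion,
      mem_neighborFinset, not_or, not_exists, not_and]
  have hdisj : Disjoint s (s.biUnion (fun x => G.neighborFinset x)) := by
    rw [Finset.disjoint_left]
    intro v hv hv'
    rw [mem_biUnion] at hv'
    obtain ⟨u, hu, hadj⟩ := hv'
    rw [mem_neighborFinset] at hadj
    exact hind u hu v hv hadj
  rw [hcompl, ← card_union_of_disjoint hdisj]
  exact card_compl_add_card _

lemma biUnion_card_one {r : ℕ} (hreg : G.IsRegularOfDegree r) {s : Finset V}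
    (hcard : s.card = 1) : (s.biUnion (fun x => G.neighborFinset x)).card = r := by
  obtain ⟨a, rfl⟩ := card_eq_one.mp hcard
  rw [singleton_biUnion]
  rw [G.card_neighborFinset_eq_degree, hreg a]

lemma biUnion_card_two {r : ℕ} (h5 : G.girth = 5) (hd : G.diam = 2)
    (hreg : G.IsRegularOfDegree r) {s : Finset V} (hcard : s.card = 2)
    (hind : ∀ u ∈ s, ∀ v ∈ s, ¬ G.Adj u v) :
    (s.biUnion (fun x => G.neighborFinset x)).card + 1 = 2 * r := by
  obtain ⟨a, b, hab, rfl⟩ := card_eq_two.mp hcard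
  have hnadj : ¬ G.Adj a b := hind a (by simp) b (by simp)
  have hbi : ({a, b} : Finset V).biUnion (fun x => G.neighborFinset x)
      = G.neighborFinset a ∪ G.neighborFinset b := by
    simp [biUnion_insert, singleton_biUnion]
  rw [hbi]
  have h1 := card_union_add_card_inter (G.neighborFinset a) (G.neighborFinset b)
  rw [common_card h5 hd hab hnadj] at h1
  rw [G.card_neighborFinset_eq_degree, G.card_neighborFinset_eq_degree, hreg, hreg] at h1
  omega

lemma biUnion_card_three {r : ℕ} (h5 : G.girth = 5) (hd : G.diam = 2)
    (hreg : G.IsRegularOfDegree r) {s : Finset V} (hcard : s.card = 3)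
    (hind : ∀ u ∈ s, ∀ v ∈ s, ¬ G.Adj u v) :
    (s.biUnion (fun x => G.neighborFinset x)).card + 3 =
      3 * r + (univ.filter fun w => ∀ u ∈ s, G.Adj w u).card := by
  obtain ⟨a, b, c, hab, hac, hbc, rfl⟩ := card_eq_three.mp hcard
  set A := G.neighborFinset a
  set B := G.neighborFinset b
  set C := G.neighborFinset c
  have hAB : (A ∩ B).card = 1 :=
    common_card h5 hd hab (hind a (by simp) b (by simp))
  have hAC : (A ∩ C).card = 1 :=
    common_card h5 hd hac (hind a (by simp) c (by simp))
  have hBC : (B ∩ C).card = 1 :=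
    common_card h5 hd hbc (hind b (by simp) c (by simp))
  have hA : A.card = r := by rw [G.card_neighborFinset_eq_degree, hreg]
  have hB : B.card = r := by rw [G.card_neighborFinset_eq_degree, hreg]
  have hC : C.card = r := by rw [G.card_neighborFinset_eq_degree, hreg]
  have hbi : ({a, b, c} : Finset V).biUnion (fun x => G.neighborFinset x) = A ∪ B ∪ C := by
    simp [biUnion_insert, singleton_biUnion, union_assoc, A, B, C]
  have hcommon : (univ.filter fun w => ∀ u ∈ ({a, b, c} : Finset V), G.Adj w u)
      = A ∩ B ∩ C := by
    ext w
    simp only [mem_filter, mem_univ, true_and, mem_inter, A, B, C, mem_neighborFinset,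
      mem_insert, mem_singleton]
    constructor
    · intro h
      exact ⟨⟨(h a (by tauto)).symm, (h b (by tauto)).symm⟩, (h c (by tauto)).symm⟩
    · rintro ⟨⟨h1, h2⟩, h3⟩ u hu
      rcases hu with rfl | rfl | rfl
      · exact h1.symm
      · exact h2.symm
      · exact h3.symm
  rw [hbi, hcommon]
  have e1 := card_union_add_card_inter (A ∪ B) C
  have e2 : (A ∪ B) ∩ C = (A ∩ C) ∪ (B ∩ C) := union_inter_distrib_right ..
  have e3 := card_union_add_card_inter (A ∩ C) (B ∩ C)
  have e4 : (A ∩ C) ∩ (B ∩ C) = A ∩ B ∩ C := by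
    ext x; simp only [mem_inter]; tauto
  have e5 := card_union_add_card_inter A B
  rw [e2] at e1
  rw [e4] at e3
  omega

lemma sum_common {r : ℕ} (h5 : G.girth = 5) (hreg : G.IsRegularOfDegree r) :
    ∑ s ∈ indepSets G 3, (univ.filter fun w => ∀ u ∈ s, G.Adj w u).card
      = Fintype.card V * r.choose 3 := by
  have hR : Fintype.card V * r.choose 3
      = ((univ : Finset V).sigma fun w => (G.neighborFinset w).powersetCard 3).card := by
    rw [card_sigma]
    rw [Finset.sum_congr rfl (fun w _ => by
      rw [card_powersetCard, G.card_neighborFinset_eq_degree, hreg w])]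
    rw [sum_const, smul_eq_mul, card_univ]
  rw [hR, ← card_sigma]
  refine Finset.card_bij' (fun a _ => ⟨a.2, a.1⟩) (fun b _ => ⟨b.2, b.1⟩) ?_ ?_ ?_ ?_
  · rintro ⟨s, w⟩ ha
    rw [mem_sigma] at ha
    obtain ⟨hs, hw⟩ := ha
    rw [mem_indepSets] at hs
    simp only [mem_filter, mem_univ, true_and] at hw
    rw [mem_sigma, mem_powersetCard]
    exact ⟨mem_univ _, fun u hu => by rw [mem_neighborFinset]; exact hw u hu, hs.1⟩
  · rintro ⟨w, s⟩ hb
    rw [mem_sigma, mem_powersetCard] at hb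
    obtain ⟨-, hsub, hcard⟩ := hb
    rw [mem_sigma, mem_indepSets]
    refine ⟨⟨hcard, ?_⟩, ?_⟩
    · intro u hu v hv hadj
      have h1 := mem_neighborFinset .. |>.mp (hsub hu)
      have h2 := mem_neighborFinset .. |>.mp (hsub hv)
      exact no_tri h5 h1 hadj h2
    · simp only [mem_filter, mem_univ, true_and]
      intro u hu
      exact (mem_neighborFinset ..).mp (hsub hu)
  · rintro ⟨s, w⟩ _; rfl
  · rintro ⟨w, s⟩ _; rfl

lemma int_choose2 {k : ℕ} (hk : 1 ≤ k) : 2 * (k.choose 2 : ℤ) = k * ((k : ℤ) - 1) := by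
  have h := Nat.descFactorial_eq_factorial_mul_choose k 2
  simp [Nat.descFactorial_succ, Nat.descFactorial_zero, Nat.factorial] at h
  zify [show 1 ≤ k from hk] at h
  linear_combination -h

lemma int_choose3 {k : ℕ} (hk : 2 ≤ k) : 6 * (k.choose 3 : ℤ) = k * ((k : ℤ) - 1) * ((k : ℤ) - 2) := by
  have h := Nat.descFactorial_eq_factorial_mul_choose k 3
  simp [Nat.descFactorial_succ, Nat.descFactorial_zero, Nat.factorial] at h
  zify [show 1 ≤ k by omega, show 2 ≤ k from hk] at h
  linear_combination -h

lemma int_choose4 {k : ℕ} (hk : 3 ≤ k) :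
    24 * (k.choose 4 : ℤ) = k * ((k : ℤ) - 1) * ((k : ℤ) - 2) * ((k : ℤ) - 3) := by
  have h := Nat.descFactorial_eq_factorial_mul_choose k 4
  simp [Nat.descFactorial_succ, Nat.descFactorial_zero, Nat.factorial] at h
  zify [show 1 ≤ k by omega, show 2 ≤ k by omega, show 3 ≤ k from hk] at h
  linear_combination -h

end Stmt18Aux


/-- Let `G` be a finite `r`-regular simple graph with girth 5 and diameter 2, with `n`
vertices and `m` edges.  Then
`i_4(G) = C(n,4) − C(n−2,2)·m + n(n−4)·C(r,2) − n·C(r,3) + C(m,2) − m·(r−1)²`,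
as an identity of integers. -/
theorem stmt_18 {V : Type*} [Fintype V] [DecidableEq V] (G : SimpleGraph V) [DecidableRel G.Adj]
    (n r m : ℕ) (hreg : G.IsRegularOfDegree r) (hgirth : G.girth = 5) (hdiam : G.diam = 2)
    (hn : Fintype.card V = n) (hm : G.edgeFinset.card = m) :
    (numIndep G 4 : ℤ) =
      (n.choose 4 : ℤ) - ((n - 2).choose 2 : ℤ) * m
        + (n : ℤ) * ((n : ℤ) - 4) * (r.choose 2 : ℤ) - (n : ℤ) * (r.choose 3 : ℤ)
        + (m.choose 2 : ℤ) - (m : ℤ) * ((r : ℤ) - 1) ^ 2 := by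
  classical
  obtain ⟨hr2, hnrr, hhs⟩ : 2 ≤ r ∧ n = r * r + 1 ∧ n * r = 2 * m := by
    refine ⟨Stmt18Aux.r_ge_two hgirth hdiam hreg, ?_, ?_⟩
    · rw [← hn]; exact Stmt18Aux.card_V hgirth hdiam hreg
    · rw [← hn]; exact Stmt18Aux.handshake hreg hm
  have hn5 : 5 ≤ n := by
    have : 2 * 2 ≤ r * r := Nat.mul_le_mul hr2 hr2
    omega
  have hm1 : 1 ≤ m := by
    have : 5 * 2 ≤ n * r := Nat.mul_le_mul (by omega) hr2
    omega
  -- counting equations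
  have hI1 : (Stmt18Aux.indepSets G 1).card = n := by
    rw [Stmt18Aux.indepSets, filter_true_of_mem, card_powersetCard, card_univ, hn,
      Nat.choose_one_right]
    intro s hs
    rw [mem_powersetCard_univ] at hs
    obtain ⟨a, rfl⟩ := card_eq_one.mp hs
    intro u hu v hv
    rw [mem_singleton] at hu hv
    subst hu; subst hv
    simp
  have hA1 : 2 * (Stmt18Aux.indepSets G 2).card
      = ∑ s ∈ Stmt18Aux.indepSets G 1, (Stmt18Aux.extFin G s).card := by
    have := Stmt18Aux.count_step (G := G) 1
    norm_num at this
    exact this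
  have hB1 : (∑ s ∈ Stmt18Aux.indepSets G 1, (Stmt18Aux.extFin G s).card)
      + n * (1 + r) = n * n := by
    have hsum : ∑ s ∈ Stmt18Aux.indepSets G 1, ((Stmt18Aux.extFin G s).card + (1 + r))
        = ∑ s ∈ Stmt18Aux.indepSets G 1, n := by
      refine Finset.sum_congr rfl fun s hs => ?_
      rw [Stmt18Aux.mem_indepSets] at hs
      have h1 := Stmt18Aux.extFin_card (G := G) hs.2
      have h2 := Stmt18Aux.biUnion_card_one hreg hs.1
      omega
    rw [sum_add_distrib, sum_const, sum_const, smul_eq_mul, smul_eq_mul, hI1] at hsum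
    exact hsum
  have hA2 : 3 * (Stmt18Aux.indepSets G 3).card
      = ∑ s ∈ Stmt18Aux.indepSets G 2, (Stmt18Aux.extFin G s).card := by
    have := Stmt18Aux.count_step (G := G) 2
    norm_num at this
    exact this
  have hB2 : (∑ s ∈ Stmt18Aux.indepSets G 2, (Stmt18Aux.extFin G s).card)
      + (Stmt18Aux.indepSets G 2).card * (1 + 2 * r)
      = (Stmt18Aux.indepSets G 2).card * n := by
    have hsum : ∑ s ∈ Stmt18Aux.indepSets G 2, ((Stmt18Aux.extFin G s).card + (1 + 2 * r))
        = ∑ s ∈ Stmt18Aux.indepSets G 2, n := by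
      refine Finset.sum_congr rfl fun s hs => ?_
      rw [Stmt18Aux.mem_indepSets] at hs
      have h1 := Stmt18Aux.extFin_card (G := G) hs.2
      have h2 := Stmt18Aux.biUnion_card_two hgirth hdiam hreg hs.1 hs.2
      omega
    rw [sum_add_distrib, sum_const, sum_const, smul_eq_mul, smul_eq_mul] at hsum
    exact hsum
  have hA3 : 4 * (Stmt18Aux.indepSets G 4).card
      = ∑ s ∈ Stmt18Aux.indepSets G 3, (Stmt18Aux.extFin G s).card := by
    have := Stmt18Aux.count_step (G := G) 3
    norm_num at this
    exact this
  have hB3 : (∑ s ∈ Stmt18Aux.indepSets G 3, (Stmt18Aux.extFin G s).card)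
      + ((Stmt18Aux.indepSets G 3).card * (3 * r) + n * r.choose 3)
      = (Stmt18Aux.indepSets G 3).card * n := by
    have hsum : ∑ s ∈ Stmt18Aux.indepSets G 3,
        ((Stmt18Aux.extFin G s).card
          + (3 * r + (univ.filter fun w => ∀ u ∈ s, G.Adj w u).card))
        = ∑ s ∈ Stmt18Aux.indepSets G 3, n := by
      refine Finset.sum_congr rfl fun s hs => ?_
      rw [Stmt18Aux.mem_indepSets] at hs
      have h1 := Stmt18Aux.extFin_card (G := G) hs.2
      have h2 := Stmt18Aux.biUnion_card_three hgirth hdiam hreg hs.1 hs.2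
      omega
    rw [sum_add_distrib, sum_add_distrib, sum_const, sum_const, smul_eq_mul, smul_eq_mul,
      Stmt18Aux.sum_common hgirth hreg, hn] at hsum
    exact hsum
  -- move to ℤ
  have hgoalrw : (numIndep G 4 : ℤ) = ((Stmt18Aux.indepSets G 4).card : ℤ) := rfl
  rw [hgoalrw]
  have ZA1 : 2 * ((Stmt18Aux.indepSets G 2).card : ℤ)
      = ((∑ s ∈ Stmt18Aux.indepSets G 1, (Stmt18Aux.extFin G s).card : ℕ) : ℤ) := by
    exact_mod_cast hA1
  have ZB1 : ((∑ s ∈ Stmt18Aux.indepSets G 1, (Stmt18Aux.extFin G s).card : ℕ) : ℤ)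
      + (n : ℤ) * (1 + r) = (n : ℤ) * n := by exact_mod_cast hB1
  have ZA2 : 3 * ((Stmt18Aux.indepSets G 3).card : ℤ)
      = ((∑ s ∈ Stmt18Aux.indepSets G 2, (Stmt18Aux.extFin G s).card : ℕ) : ℤ) := by
    exact_mod_cast hA2
  have ZB2 : ((∑ s ∈ Stmt18Aux.indepSets G 2, (Stmt18Aux.extFin G s).card : ℕ) : ℤ)
      + ((Stmt18Aux.indepSets G 2).card : ℤ) * (1 + 2 * r)
      = ((Stmt18Aux.indepSets G 2).card : ℤ) * n := by exact_mod_cast hB2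
  have ZA3 : 4 * ((Stmt18Aux.indepSets G 4).card : ℤ)
      = ((∑ s ∈ Stmt18Aux.indepSets G 3, (Stmt18Aux.extFin G s).card : ℕ) : ℤ) := by
    exact_mod_cast hA3
  have ZB3 : ((∑ s ∈ Stmt18Aux.indepSets G 3, (Stmt18Aux.extFin G s).card : ℕ) : ℤ)
      + (((Stmt18Aux.indepSets G 3).card : ℤ) * (3 * r) + (n : ℤ) * (r.choose 3 : ℤ))
      = ((Stmt18Aux.indepSets G 3).card : ℤ) * n := by exact_mod_cast hB3
  have hF4 : (n : ℤ) = (r : ℤ) * r + 1 := by exact_mod_cast hnrr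
  have hF5 : (n : ℤ) * r = 2 * m := by exact_mod_cast hhs
  have hc3 : 6 * (r.choose 3 : ℤ) = r * ((r : ℤ) - 1) * ((r : ℤ) - 2) :=
    Stmt18Aux.int_choose3 hr2
  have hc2r : 2 * (r.choose 2 : ℤ) = r * ((r : ℤ) - 1) :=
    Stmt18Aux.int_choose2 (by omega)
  have hc2m : 2 * (m.choose 2 : ℤ) = m * ((m : ℤ) - 1) :=
    Stmt18Aux.int_choose2 hm1
  have hc4n : 24 * (n.choose 4 : ℤ) = n * ((n : ℤ) - 1) * ((n : ℤ) - 2) * ((n : ℤ) - 3) :=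
    Stmt18Aux.int_choose4 (by omega)
  have hcn2 : 2 * ((n - 2).choose 2 : ℤ) = ((n : ℤ) - 2) * ((n : ℤ) - 3) := by
    have h := Stmt18Aux.int_choose2 (k := n - 2) (by omega)
    have hc : ((n - 2 : ℕ) : ℤ) = (n : ℤ) - 2 := by
      have h2 : (2 : ℕ) ≤ n := by omega
      push_cast [h2]
      ring
    rw [hc] at h
    linear_combination h
  set i2 := ((Stmt18Aux.indepSets G 2).card : ℤ)
  set i3 := ((Stmt18Aux.indepSets G 3).card : ℤ)
  set i4 := ((Stmt18Aux.indepSets G 4).card : ℤ)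
  have h2i2 : 2 * i2 = (n : ℤ) * ((n : ℤ) - 1 - r) := by linear_combination ZA1 + ZB1
  have h6i3 : 6 * i3 = (n : ℤ) * ((n : ℤ) - 1 - r) * ((n : ℤ) - 1 - 2 * r) := by
    linear_combination 2 * ZA2 + 2 * ZB2 + ((n : ℤ) - 1 - 2 * r) * h2i2
  have h24 : 24 * i4 = (n : ℤ) * ((n : ℤ) - 1 - r) * ((n : ℤ) - 1 - 2 * r) * ((n : ℤ) - 3 * r)
      - (n : ℤ) * ((r : ℤ) * ((r : ℤ) - 1) * ((r : ℤ) - 2)) := by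
    linear_combination 6 * ZA3 + 6 * ZB3 + ((n : ℤ) - 3 * r) * h6i3 - (n : ℤ) * hc3
  have G24 : 24 * i4 = 24 * ((n.choose 4 : ℤ) - ((n - 2).choose 2 : ℤ) * m
        + (n : ℤ) * ((n : ℤ) - 4) * (r.choose 2 : ℤ) - (n : ℤ) * (r.choose 3 : ℤ)
        + (m.choose 2 : ℤ) - (m : ℤ) * ((r : ℤ) - 1) ^ 2) := by
    linear_combination h24 - hc4n + 12 * (m : ℤ) * hcn2 - 12 * (n : ℤ) * ((n : ℤ) - 4) * hc2r
      + 4 * (n : ℤ) * hc3 - 12 * hc2m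
      + (4 * (n : ℤ) ^ 2 - 9 * (n : ℤ) * r - 6 * (n : ℤ)) * hF4
      + (6 * (m : ℤ) - 6 * (n : ℤ) ^ 2 + 3 * (n : ℤ) * r + 30 * (n : ℤ) - 12 * (r : ℤ) ^ 2
          + 24 * (r : ℤ) - 54) * hF5
  linarith
end
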